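/- arXiv:2011.05274 — 6 statements merged into one kernel-verified Lean document; each statement's English description precedes it below -/
import Mathlib

section
/- (Theorem 1(i)) Along any solution of the closed-loop multi-sUAS system, the Hamiltonian H = V_p + V_k + V_b is differentiable in time and satisfies Ḣ(t) = −Σ_{i=1}^N K_i ‖q̇_i(t) − v̂‖² ≤ 0 for all t > t₀; in particular H is nonincreasing along trajectories. -/
open Finset RealInnerProductSpace

lemma sum_erase_swap {N : ℕ} (G : Fin N → Fin N → ℝ) :
    ∑ i, ∑ j ∈ univ.erase i, G i j = ∑ i, ∑ j ∈ univ.erase i, G j i :=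
  Finset.sum_comm' (fun x y => by
    simp only [Finset.mem_univ, Finset.mem_erase, and_true, true_and]
    exact ne_comm)

lemma aux_alg {N m : ℕ} (f g : Fin N → Fin N → ℝ)
    (Q : Fin N → Fin N → EuclideanSpace ℝ (Fin 3))
    (hsymm : ∀ i j, f i j * g i j = f j i * g j i)
    (hQ : ∀ i j, Q j i = -Q i j)
    (v : Fin N → EuclideanSpace ℝ (Fin 3)) (vhat : EuclideanSpace ℝ (Fin 3))
    (A : Fin m → EuclideanSpace ℝ (Fin 3)) (e : Fin N → Fin m → ℝ)
    (hA : ∀ n, ⟪A n, vhat⟫ = 0) (K : Fin N → ℝ) :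
    -(∑ i, K i * ‖v i - vhat‖ ^ 2)
    = (1/2 : ℝ) * (∑ i, ∑ j ∈ univ.erase i, f i j * (g i j * ⟪Q i j, v i - v j⟫))
    + (1/2 : ℝ) * (∑ i,
        (⟪v i - vhat, -(∑ j ∈ univ.erase i, (f i j * g i j) • Q i j)
            - (∑ n, e i n • A n) - K i • (v i - vhat)⟫
        + ⟪-(∑ j ∈ univ.erase i, (f i j * g i j) • Q i j)
            - (∑ n, e i n • A n) - K i • (v i - vhat), v i - vhat⟫))
    + (∑ i, ∑ n, e i n * ⟪A n, v i⟫) := by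
  have hAn : ∀ (n : Fin m) (i : Fin N), ⟪A n, v i - vhat⟫ = ⟪A n, v i⟫ := fun n i => by
    rw [inner_sub_right, hA, sub_zero]
  -- kinetic per-agent identity
  have hkin : ∀ i : Fin N,
      (⟪v i - vhat, -(∑ j ∈ univ.erase i, (f i j * g i j) • Q i j)
          - (∑ n, e i n • A n) - K i • (v i - vhat)⟫
      + ⟪-(∑ j ∈ univ.erase i, (f i j * g i j) • Q i j)
          - (∑ n, e i n • A n) - K i • (v i - vhat), v i - vhat⟫)
      = -(2 * ∑ j ∈ univ.erase i, (f i j * g i j) * ⟪Q i j, v i - vhat⟫)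
        - 2 * (∑ n, e i n * ⟪A n, v i⟫) - 2 * (K i * ‖v i - vhat‖ ^ 2) := by
    intro i
    have hc : ⟪v i - vhat, -(∑ j ∈ univ.erase i, (f i j * g i j) • Q i j)
          - (∑ n, e i n • A n) - K i • (v i - vhat)⟫
        = ⟪-(∑ j ∈ univ.erase i, (f i j * g i j) • Q i j)
          - (∑ n, e i n • A n) - K i • (v i - vhat), v i - vhat⟫ := real_inner_comm _ _
    rw [hc]
    simp only [inner_sub_left, inner_neg_left, sum_inner, real_inner_smul_left, hAn,
      real_inner_self_eq_norm_sq]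
    have hww : ⟪v i, v i - vhat⟫ - ⟪vhat, v i - vhat⟫ = ‖v i - vhat‖ ^ 2 := by
      rw [← inner_sub_left, real_inner_self_eq_norm_sq]
    linear_combination (-2 * K i) * hww
  -- pair potential identity
  have hpair : (∑ i, ∑ j ∈ univ.erase i, f i j * (g i j * ⟪Q i j, v i - v j⟫))
      = 2 * ∑ i, ∑ j ∈ univ.erase i, (f i j * g i j) * ⟪Q i j, v i - vhat⟫ := by
    have hswap := sum_erase_swap (fun i j => (f i j * g i j) * ⟪Q i j, v i - vhat⟫)
    have hterm : ∀ i j : Fin N,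
        f i j * (g i j * ⟪Q i j, v i - v j⟫)
        = (f i j * g i j) * ⟪Q i j, v i - vhat⟫
          + (f j i * g j i) * ⟪Q j i, v j - vhat⟫ := by
      intro i j
      have h1 : ⟪Q i j, v i - v j⟫ = ⟪Q i j, v i - vhat⟫ - ⟪Q i j, v j - vhat⟫ := by
        rw [← inner_sub_right]; congr 1; abel
      rw [h1, hQ i j, inner_neg_left]
      linear_combination (-(⟪Q i j, v j - vhat⟫) : ℝ) * hsymm i j
    calc (∑ i, ∑ j ∈ univ.erase i, f i j * (g i j * ⟪Q i j, v i - v j⟫))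
        = ∑ i, ∑ j ∈ univ.erase i,
            ((f i j * g i j) * ⟪Q i j, v i - vhat⟫
              + (f j i * g j i) * ⟪Q j i, v j - vhat⟫) := by
          exact Finset.sum_congr rfl fun i _ => Finset.sum_congr rfl fun j _ => hterm i j
      _ = (∑ i, ∑ j ∈ univ.erase i, (f i j * g i j) * ⟪Q i j, v i - vhat⟫)
          + ∑ i, ∑ j ∈ univ.erase i, (f j i * g j i) * ⟪Q j i, v j - vhat⟫ := by
          rw [← Finset.sum_add_distrib]
          exact Finset.sum_congr rfl fun i _ => Finset.sum_add_distrib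
      _ = 2 * ∑ i, ∑ j ∈ univ.erase i, (f i j * g i j) * ⟪Q i j, v i - vhat⟫ := by
          rw [← hswap]; ring
  rw [hpair]
  rw [Finset.sum_congr rfl fun i (_ : i ∈ (univ : Finset (Fin N))) => hkin i]
  rw [Finset.sum_sub_distrib, Finset.sum_sub_distrib, ← Finset.mul_sum, ← Finset.mul_sum]
  rw [show (∑ i : Fin N, -(2 * ∑ j ∈ univ.erase i, (f i j * g i j) * ⟪Q i j, v i - vhat⟫))
      = -(2 * ∑ i : Fin N, ∑ j ∈ univ.erase i, (f i j * g i j) * ⟪Q i j, v i - vhat⟫) by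
    rw [Finset.sum_neg_distrib, ← Finset.mul_sum]]
  ring



/-- Theorem 1(i): Along any solution of the closed-loop multi-sUAS
system with the APF-based control protocol, the Hamiltonian `H = V_p + V_k + V_b`
is differentiable in time and `Ḣ(t) = −Σᵢ Kᵢ ‖q̇ᵢ(t) − v̂‖² ≤ 0` for all `t > t₀`;
in particular `H` is nonincreasing. -/
theorem hamiltonian_dissipation
    (N m : ℕ) (ε : ℝ) (hε : 0 < ε)
    -- agent positions and velocities
    (q qv : Fin N → ℝ → EuclideanSpace ℝ (Fin 3))
    -- boundary planes
    (A : Fin m → EuclideanSpace ℝ (Fin 3)) (b : Fin m → ℝ)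
    (hA : ∀ n, ‖A n‖ = 1)
    -- reference velocity, parallel to every boundary plane
    (vhat : EuclideanSpace ℝ (Fin 3)) (hvhat : ∀ n, ⟪A n, vhat⟫ = 0)
    -- potential functions
    (dhat dbhat : ℝ) (ψ ψb φ φb : ℝ → ℝ)
    (hψnn : ∀ d, 0 ≤ ψ d) (hψanti : Antitone ψ)
    (hψC1 : ContDiff ℝ 1 ψ) (hφ : deriv ψ = φ)
    (hψ0 : ∀ d, ψ d = 0 ↔ dhat ≤ d) (hψpos : ∀ d, 0 < ψ d ↔ d < dhat)
    (hψbnn : ∀ d, 0 ≤ ψb d) (hψbanti : Antitone ψb)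
    (hψbC1 : ContDiff ℝ 1 ψb) (hφb : deriv ψb = φb)
    (hψb0 : ∀ d, ψb d = 0 ↔ dbhat ≤ d) (hψbpos : ∀ d, 0 < ψb d ↔ d < dbhat)
    -- damping gains
    (K : Fin N → ℝ) (hK : ∀ i, 0 < K i)
    -- closed-loop double-integrator dynamics  q̈ᵢ = uᵢ
    (hq : ∀ i t, HasDerivAt (q i) (qv i t) t)
    (hqv : ∀ i t, HasDerivAt (qv i)
      (-(∑ j ∈ univ.erase i,
          (φ ((1 / ε) * (Real.sqrt (1 + ε * ‖q i t - q j t‖ ^ 2) - 1)) *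
            (Real.sqrt (1 + ε * ‖q i t - q j t‖ ^ 2))⁻¹) • (q i t - q j t))
        - (∑ n, φb (⟪A n, q i t⟫ - b n) • A n)
        - K i • (qv i t - vhat)) t)
    -- the Hamiltonian  H = V_p + V_k + V_b
    (t₀ : ℝ) (H : ℝ → ℝ)
    (hH : ∀ t, H t =
      (1 / 2) * ∑ i, ∑ j ∈ univ.erase i,
          ψ ((1 / ε) * (Real.sqrt (1 + ε * ‖q i t - q j t‖ ^ 2) - 1))
      + (1 / 2) * ∑ i, ‖qv i t - vhat‖ ^ 2
      + ∑ i, ∑ n, ψb (⟪A n, q i t⟫ - b n)) :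
    (∀ t, t₀ < t →
        HasDerivAt H (-(∑ i, K i * ‖qv i t - vhat‖ ^ 2)) t ∧
        -(∑ i, K i * ‖qv i t - vhat‖ ^ 2) ≤ 0) ∧
    AntitoneOn H (Set.Ici t₀) := by
  have hε' : ε ≠ 0 := ne_of_gt hε
  have sqpos : ∀ x : EuclideanSpace ℝ (Fin 3), 0 < 1 + ε * ‖x‖ ^ 2 := by
    intro x; positivity
  have sqrtpos : ∀ x : EuclideanSpace ℝ (Fin 3), 0 < Real.sqrt (1 + ε * ‖x‖ ^ 2) :=
    fun x => Real.sqrt_pos.mpr (sqpos x)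
  have key : ∀ t, HasDerivAt H (-(∑ i, K i * ‖qv i t - vhat‖ ^ 2)) t := by
    intro t
    have hHfun : H = fun s =>
      (1 / 2) * ∑ i, ∑ j ∈ univ.erase i,
          ψ ((1 / ε) * (Real.sqrt (1 + ε * ‖q i s - q j s‖ ^ 2) - 1))
      + (1 / 2) * ∑ i, ‖qv i s - vhat‖ ^ 2
      + ∑ i, ∑ n, ψb (⟪A n, q i s⟫ - b n) := funext hH
    rw [hHfun]
    -- pairwise potential derivative
    have hpair : ∀ i j : Fin N, HasDerivAt
        (fun s => ψ ((1 / ε) * (Real.sqrt (1 + ε * ‖q i s - q j s‖ ^ 2) - 1)))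
        (φ ((1 / ε) * (Real.sqrt (1 + ε * ‖q i t - q j t‖ ^ 2) - 1)) *
          ((Real.sqrt (1 + ε * ‖q i t - q j t‖ ^ 2))⁻¹ *
            ⟪q i t - q j t, qv i t - qv j t⟫)) t := by
      intro i j
      have hΔ : HasDerivAt (fun s => q i s - q j s) (qv i t - qv j t) t :=
        (hq i t).sub (hq j t)
      have hnorm : HasDerivAt (fun s => ‖q i s - q j s‖ ^ 2)
          (⟪q i t - q j t, qv i t - qv j t⟫ + ⟪qv i t - qv j t, q i t - q j t⟫) t := by
        simpa only [real_inner_self_eq_norm_sq] using hΔ.inner ℝ hΔ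
      have h1 : HasDerivAt (fun s => 1 + ε * ‖q i s - q j s‖ ^ 2)
          (ε * (⟪q i t - q j t, qv i t - qv j t⟫ + ⟪qv i t - qv j t, q i t - q j t⟫)) t :=
        (hnorm.const_mul ε).const_add 1
      have h2 := h1.sqrt (ne_of_gt (sqpos _))
      have h3 := (h2.sub_const 1).const_mul (1 / ε)
      have hψd : HasDerivAt ψ
          (φ ((1 / ε) * (Real.sqrt (1 + ε * ‖q i t - q j t‖ ^ 2) - 1)))
          ((1 / ε) * (Real.sqrt (1 + ε * ‖q i t - q j t‖ ^ 2) - 1)) := by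
        have := ((hψC1.differentiable one_ne_zero) _).hasDerivAt
          (x := (1 / ε) * (Real.sqrt (1 + ε * ‖q i t - q j t‖ ^ 2) - 1))
        rwa [hφ] at this
      have := hψd.comp t h3
      refine this.congr_deriv ?_
      have hcomm : ⟪qv i t - qv j t, q i t - q j t⟫ = ⟪q i t - q j t, qv i t - qv j t⟫ :=
        real_inner_comm _ _
      rw [hcomm]
      have hs0 : Real.sqrt (1 + ε * ‖q i t - q j t‖ ^ 2) ≠ 0 := (sqrtpos _).ne'
      field_simp
      ring
    -- barrier derivative
    have hbar : ∀ (i : Fin N) (n : Fin m), HasDerivAt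
        (fun s => ψb (⟪A n, q i s⟫ - b n))
        (φb (⟪A n, q i t⟫ - b n) * ⟪A n, qv i t⟫) t := by
      intro i n
      have hin : HasDerivAt (fun s => ⟪A n, q i s⟫ - b n) (⟪A n, qv i t⟫) t := by
        simpa using ((hasDerivAt_const t (A n)).inner ℝ (hq i t)).sub_const (b n)
      have hψbd : HasDerivAt ψb (φb (⟪A n, q i t⟫ - b n)) (⟪A n, q i t⟫ - b n) := by
        have := ((hψbC1.differentiable one_ne_zero) _).hasDerivAt (x := ⟪A n, q i t⟫ - b n)
        rwa [hφb] at this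
      exact hψbd.comp t hin
    -- kinetic derivative
    have hkin : ∀ i : Fin N, HasDerivAt (fun s => ‖qv i s - vhat‖ ^ 2)
        (⟪qv i t - vhat,
            -(∑ j ∈ univ.erase i,
              (φ ((1 / ε) * (Real.sqrt (1 + ε * ‖q i t - q j t‖ ^ 2) - 1)) *
                (Real.sqrt (1 + ε * ‖q i t - q j t‖ ^ 2))⁻¹) • (q i t - q j t))
            - (∑ n, φb (⟪A n, q i t⟫ - b n) • A n)
            - K i • (qv i t - vhat)⟫ +
         ⟪-(∑ j ∈ univ.erase i,
              (φ ((1 / ε) * (Real.sqrt (1 + ε * ‖q i t - q j t‖ ^ 2) - 1)) *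
                (Real.sqrt (1 + ε * ‖q i t - q j t‖ ^ 2))⁻¹) • (q i t - q j t))
            - (∑ n, φb (⟪A n, q i t⟫ - b n) • A n)
            - K i • (qv i t - vhat), qv i t - vhat⟫) t := by
      intro i
      have hw : HasDerivAt (fun s => qv i s - vhat)
          (-(∑ j ∈ univ.erase i,
              (φ ((1 / ε) * (Real.sqrt (1 + ε * ‖q i t - q j t‖ ^ 2) - 1)) *
                (Real.sqrt (1 + ε * ‖q i t - q j t‖ ^ 2))⁻¹) • (q i t - q j t))
            - (∑ n, φb (⟪A n, q i t⟫ - b n) • A n)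
            - K i • (qv i t - vhat)) t := (hqv i t).sub_const vhat
      simpa only [real_inner_self_eq_norm_sq] using hw.inner ℝ hw
    have hVp := (HasDerivAt.sum (fun i (_ : i ∈ univ) =>
        HasDerivAt.sum (fun j (_ : j ∈ univ.erase i) => hpair i j))).const_mul (1/2 : ℝ)
    have hVk := (HasDerivAt.sum (fun i (_ : i ∈ (univ : Finset (Fin N))) => hkin i)).const_mul (1/2 : ℝ)
    have hVb := HasDerivAt.sum (fun i (_ : i ∈ (univ : Finset (Fin N))) =>
        HasDerivAt.sum (fun n (_ : n ∈ (univ : Finset (Fin m))) => hbar i n))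
    have htot := (hVp.add hVk).add hVb
    convert htot using 1
    · rfl
    · rfl
    · funext s
      simp only [Pi.add_apply, Finset.sum_apply]
    have hsymm : ∀ i j : Fin N,
        φ ((1 / ε) * (Real.sqrt (1 + ε * ‖q i t - q j t‖ ^ 2) - 1)) *
          (Real.sqrt (1 + ε * ‖q i t - q j t‖ ^ 2))⁻¹
      = φ ((1 / ε) * (Real.sqrt (1 + ε * ‖q j t - q i t‖ ^ 2) - 1)) *
          (Real.sqrt (1 + ε * ‖q j t - q i t‖ ^ 2))⁻¹ :=
      fun i j => by rw [norm_sub_rev (q i t) (q j t)]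
    exact aux_alg
      (fun i j => φ ((1 / ε) * (Real.sqrt (1 + ε * ‖q i t - q j t‖ ^ 2) - 1)))
      (fun i j => (Real.sqrt (1 + ε * ‖q i t - q j t‖ ^ 2))⁻¹)
      (fun i j => q i t - q j t)
      hsymm
      (fun i j => (neg_sub (q i t) (q j t)).symm)
      (fun i => qv i t) vhat A
      (fun i n => φb (⟪A n, q i t⟫ - b n)) hvhat K
  refine ⟨fun t _ => ⟨key t, ?_⟩, ?_⟩
  · have : 0 ≤ ∑ i, K i * ‖qv i t - vhat‖ ^ 2 :=
      Finset.sum_nonneg fun i _ => mul_nonneg (hK i).le (by positivity)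
    linarith
  · refine antitoneOn_of_deriv_nonpos (convex_Ici t₀)
      (fun x _ => (key x).continuousAt.continuousWithinAt)
      (fun x _ => (key x).differentiableAt.differentiableWithinAt) ?_
    intro x _
    rw [(key x).deriv]
    have : 0 ≤ ∑ i, K i * ‖qv i x - vhat‖ ^ 2 :=
      Finset.sum_nonneg fun i _ => mul_nonneg (hK i).le (by positivity)
    linarith
end

section
/- (Theorem 1(iii), minimum-separation guarantee) Let 0 ≤ d_min < d̂. Along any solution of the closed-loop multi-sUAS system whose initial Hamiltonian satisfies H(t₀) = c < ψ(‖d_min‖_σ) (where ‖d_min‖_σ = (1/ε)(√(1 + ε d_min²) − 1)), every pair of distinct agents maintains more than the minimum separation: ‖q_i(t) − q_j(t)‖ > d_min for all t ≥ t₀ and all i ≠ j. -/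
open Finset RealInnerProductSpace

variable {E : Type*} [NormedAddCommGroup E] [InnerProductSpace ℝ E]

lemma sqrt_pos_aux (ε : ℝ) (hε : 0 < ε) (r : ℝ) : 0 < Real.sqrt (1 + ε * r ^ 2) := by
  apply Real.sqrt_pos.2; nlinarith [sq_nonneg r]

lemma pair_deriv (ε : ℝ) (hε : 0 < ε) (ψ φ : ℝ → ℝ) (hψC1 : ContDiff ℝ 1 ψ)
    (hφ : deriv ψ = φ) {f : ℝ → E} {f' : E} {t : ℝ} (hf : HasDerivAt f f' t) :
    HasDerivAt (fun s => ψ ((1 / ε) * (Real.sqrt (1 + ε * ‖f s‖ ^ 2) - 1)))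
      (φ ((1 / ε) * (Real.sqrt (1 + ε * ‖f t‖ ^ 2) - 1)) *
        (⟪f t, f'⟫ / Real.sqrt (1 + ε * ‖f t‖ ^ 2))) t := by
  have h1 : HasDerivAt (fun s => ⟪f s, f s⟫) (⟪f t, f'⟫ + ⟪f', f t⟫) t := hf.inner ℝ hf
  have h2 : HasDerivAt (fun s => 1 + ε * ⟪f s, f s⟫) (ε * (⟪f t, f'⟫ + ⟪f', f t⟫)) t :=
    (h1.const_mul ε).const_add 1
  have hpos : (0:ℝ) < 1 + ε * ⟪f t, f t⟫ := by
    rw [real_inner_self_eq_norm_sq]; nlinarith [sq_nonneg ‖f t‖]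
  have h3 := (h2.sqrt hpos.ne')
  have h4 := ((h3.sub_const 1).const_mul (1/ε))
  set x := (1 / ε) * (Real.sqrt (1 + ε * ⟪f t, f t⟫) - 1) with hx
  have hψ' : HasDerivAt ψ (φ x) x := by
    have := ((hψC1.differentiable one_ne_zero) x).hasDerivAt
    rwa [hφ] at this
  have h5 := hψ'.comp t h4
  have hval : φ x * ((1/ε) * (ε * (⟪f t, f'⟫ + ⟪f', f t⟫) / (2 * Real.sqrt (1 + ε * ⟪f t, f t⟫)))) =
      φ ((1 / ε) * (Real.sqrt (1 + ε * ‖f t‖ ^ 2) - 1)) *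
        (⟪f t, f'⟫ / Real.sqrt (1 + ε * ‖f t‖ ^ 2)) := by
    rw [real_inner_comm f' (f t), ← real_inner_self_eq_norm_sq, hx]
    have hs : Real.sqrt (1 + ε * ⟪f t, f t⟫) ≠ 0 := (Real.sqrt_pos.2 hpos).ne'
    field_simp
    ring
  rw [hval] at h5
  convert h5 using 2 with s
  · rfl
  · rfl
  rw [Function.comp_apply, real_inner_self_eq_norm_sq]

lemma barrier_deriv (ψb φb : ℝ → ℝ) (hψbC1 : ContDiff ℝ 1 ψb) (hφb : deriv ψb = φb)
    (a : E) (b : ℝ) {f : ℝ → E} {f' : E} {t : ℝ} (hf : HasDerivAt f f' t) :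
    HasDerivAt (fun s => ψb (⟪a, f s⟫ - b)) (φb (⟪a, f t⟫ - b) * ⟪a, f'⟫) t := by
  have h1 : HasDerivAt (fun s => ⟪a, f s⟫ - b) (⟪a, f'⟫ + ⟪(0:E), f t⟫) t :=
    (((hasDerivAt_const t a).inner ℝ hf).sub_const b)
  rw [inner_zero_left, add_zero] at h1
  have hψ' : HasDerivAt ψb (φb (⟪a, f t⟫ - b)) (⟪a, f t⟫ - b) := by
    have := ((hψbC1.differentiable one_ne_zero) (⟪a, f t⟫ - b)).hasDerivAt
    rwa [hφb] at this
  exact hψ'.comp t h1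

lemma kinetic_deriv (v : E) {f : ℝ → E} {f' : E} {t : ℝ} (hf : HasDerivAt f f' t) :
    HasDerivAt (fun s => ‖f s - v‖ ^ 2) (2 * ⟪f t - v, f'⟫) t := by
  have h1 : HasDerivAt (fun s => ⟪f s - v, f s - v⟫) (⟪f t - v, f'⟫ + ⟪f', f t - v⟫) t :=
    (hf.sub_const v).inner ℝ (hf.sub_const v)
  have : HasDerivAt (fun s => ⟪f s - v, f s - v⟫) (2 * ⟪f t - v, f'⟫) t := by
    convert h1 using 1; rw [real_inner_comm f' (f t - v)]; ring
  convert this using 2 with s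
  rw [real_inner_self_eq_norm_sq]

lemma sum_erase_swap_s6 {α M : Type*} [Fintype α] [DecidableEq α] [AddCommMonoid M]
    (g : α → α → M) :
    ∑ i, ∑ j ∈ univ.erase i, g i j = ∑ i, ∑ j ∈ univ.erase i, g j i := by
  have h : ∀ (f : α → α → M), ∑ i, ∑ j ∈ univ.erase i, f i j
      = ∑ i, ∑ j, if j ≠ i then f i j else 0 := by
    intro f
    refine sum_congr rfl fun i _ => ?_
    rw [← Finset.filter_ne', Finset.sum_filter]
  rw [h, h, Finset.sum_comm]
  refine sum_congr rfl fun i _ => sum_congr rfl fun j _ => ?_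
  simp only [ne_comm]

lemma energy_algebra {E : Type*} [NormedAddCommGroup E] [InnerProductSpace ℝ E] {N m : ℕ}
    (cc : Fin N → Fin N → ℝ) (hccsymm : ∀ i j, cc i j = cc j i)
    (p : Fin N → Fin N → E) (hpanti : ∀ i j, p i j = - p j i)
    (w : Fin N → E) (a : Fin m → E) (g : Fin N → Fin m → ℝ) (K : Fin N → ℝ) :
    (1/2) * (∑ i, ∑ j ∈ univ.erase i, cc i j * ⟪p i j, w i - w j⟫)
    + (1/2) * (∑ i, 2 * ⟪w i, -(∑ j ∈ univ.erase i, cc i j • p i j)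
        - (∑ n, g i n • a n) - K i • w i⟫)
    + ∑ i, ∑ n, g i n * ⟪w i, a n⟫
    = -(∑ i, K i * ‖w i‖^2) := by
  have hswap : ∑ i, ∑ j ∈ univ.erase i, cc i j * ⟪p i j, w j⟫
      = -(∑ i, ∑ j ∈ univ.erase i, cc i j * ⟪p i j, w i⟫) := by
    rw [sum_erase_swap_s6 (fun i j => cc i j * ⟪p i j, w j⟫), ← Finset.sum_neg_distrib]
    refine sum_congr rfl fun i _ => ?_
    rw [← Finset.sum_neg_distrib]
    refine sum_congr rfl fun j _ => ?_
    rw [hccsymm j i, hpanti j i, inner_neg_left]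
    ring
  have h1 : ∑ i, ∑ j ∈ univ.erase i, cc i j * ⟪p i j, w i - w j⟫
      = 2 * ∑ i, ∑ j ∈ univ.erase i, cc i j * ⟪p i j, w i⟫ := by
    simp only [inner_sub_right, mul_sub]
    rw [Finset.sum_congr rfl fun i _ => Finset.sum_sub_distrib _ _, Finset.sum_sub_distrib,
      hswap]
    ring
  have h2 : ∀ i, ⟪w i, -(∑ j ∈ univ.erase i, cc i j • p i j)
      - (∑ n, g i n • a n) - K i • w i⟫
      = -(∑ j ∈ univ.erase i, cc i j * ⟪p i j, w i⟫)
        - (∑ n, g i n * ⟪w i, a n⟫) - K i * ‖w i‖^2 := by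
    intro i
    have hcw : ∀ j, cc i j * ⟪w i, p i j⟫ = cc i j * ⟪p i j, w i⟫ := fun j => by
      rw [real_inner_comm]
    simp only [inner_sub_right, inner_neg_right, inner_sum, real_inner_smul_right,
      real_inner_self_eq_norm_sq, hcw]
  rw [h1]
  rw [Finset.sum_congr rfl fun i (_ : i ∈ univ) => congrArg (2 * ·) (h2 i)]
  simp only [mul_sub, mul_neg, Finset.sum_sub_distrib, Finset.sum_neg_distrib,
    ← Finset.mul_sum]
  ring
set_option maxHeartbeats 1000000 in
/-- Theorem 1(iii), minimum-separation guarantee: if the initial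
Hamiltonian satisfies `H(t₀) = c < ψ(‖d_min‖_σ)` with `0 ≤ d_min < d̂`, then
every pair of distinct agents maintains `‖qᵢ(t) − qⱼ(t)‖ > d_min` for all
`t ≥ t₀`. -/
theorem minimum_separation_guarantee
    (N m : ℕ) (ε : ℝ) (hε : 0 < ε)
    -- agent positions and velocities
    (q qv : Fin N → ℝ → EuclideanSpace ℝ (Fin 3))
    -- boundary planes
    (A : Fin m → EuclideanSpace ℝ (Fin 3)) (b : Fin m → ℝ)
    (hA : ∀ n, ‖A n‖ = 1)
    -- reference velocity, parallel to every boundary plane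
    (vhat : EuclideanSpace ℝ (Fin 3)) (hvhat : ∀ n, ⟪A n, vhat⟫ = 0)
    -- potential functions
    (dhat dbhat : ℝ) (ψ ψb φ φb : ℝ → ℝ)
    (hψnn : ∀ d, 0 ≤ ψ d) (hψanti : Antitone ψ)
    (hψC1 : ContDiff ℝ 1 ψ) (hφ : deriv ψ = φ)
    (hψ0 : ∀ d, ψ d = 0 ↔ dhat ≤ d) (hψpos : ∀ d, 0 < ψ d ↔ d < dhat)
    (hψbnn : ∀ d, 0 ≤ ψb d) (hψbanti : Antitone ψb)
    (hψbC1 : ContDiff ℝ 1 ψb) (hφb : deriv ψb = φb)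
    (hψb0 : ∀ d, ψb d = 0 ↔ dbhat ≤ d) (hψbpos : ∀ d, 0 < ψb d ↔ d < dbhat)
    -- damping gains
    (K : Fin N → ℝ) (hK : ∀ i, 0 < K i)
    -- closed-loop double-integrator dynamics  q̈ᵢ = uᵢ
    (hq : ∀ i t, HasDerivAt (q i) (qv i t) t)
    (hqv : ∀ i t, HasDerivAt (qv i)
      (-(∑ j ∈ univ.erase i,
          (φ ((1 / ε) * (Real.sqrt (1 + ε * ‖q i t - q j t‖ ^ 2) - 1)) *
            (Real.sqrt (1 + ε * ‖q i t - q j t‖ ^ 2))⁻¹) • (q i t - q j t))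
        - (∑ n, φb (⟪A n, q i t⟫ - b n) • A n)
        - K i • (qv i t - vhat)) t)
    -- the Hamiltonian  H = V_p + V_k + V_b
    (t₀ : ℝ) (H : ℝ → ℝ)
    (hH : ∀ t, H t =
      (1 / 2) * ∑ i, ∑ j ∈ univ.erase i,
          ψ ((1 / ε) * (Real.sqrt (1 + ε * ‖q i t - q j t‖ ^ 2) - 1))
      + (1 / 2) * ∑ i, ‖qv i t - vhat‖ ^ 2
      + ∑ i, ∑ n, ψb (⟪A n, q i t⟫ - b n))
    -- minimum-separation threshold and initial-energy sublevel condition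
    (dmin c : ℝ) (hdmin0 : 0 ≤ dmin) (hdmin : dmin < dhat)
    (hc : H t₀ = c)
    (hcs : c < ψ ((1 / ε) * (Real.sqrt (1 + ε * dmin ^ 2) - 1))) :
    ∀ t, t₀ ≤ t → ∀ i j : Fin N, i ≠ j → dmin < ‖q i t - q j t‖ := by
  -- Step 1: H has derivative -(∑ K i ‖qv i t - vhat‖²) everywhere
  have key : ∀ t, HasDerivAt H (-(∑ i, K i * ‖qv i t - vhat‖ ^ 2)) t := by
    intro t
    have hHfun : H = fun s =>
        (1 / 2) * ∑ i, ∑ j ∈ univ.erase i,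
            ψ ((1 / ε) * (Real.sqrt (1 + ε * ‖q i s - q j s‖ ^ 2) - 1))
        + (1 / 2) * ∑ i, ‖qv i s - vhat‖ ^ 2
        + ∑ i, ∑ n, ψb (⟪A n, q i s⟫ - b n) := funext hH
    rw [hHfun]
    have hpair : HasDerivAt (fun s => ∑ i, ∑ j ∈ univ.erase i,
        ψ ((1 / ε) * (Real.sqrt (1 + ε * ‖q i s - q j s‖ ^ 2) - 1)))
        (∑ i, ∑ j ∈ univ.erase i,
          φ ((1 / ε) * (Real.sqrt (1 + ε * ‖q i t - q j t‖ ^ 2) - 1)) *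
            (⟪q i t - q j t, qv i t - qv j t⟫ /
              Real.sqrt (1 + ε * ‖q i t - q j t‖ ^ 2))) t :=
      HasDerivAt.fun_sum fun i _ => HasDerivAt.fun_sum fun j _ =>
        pair_deriv ε hε ψ φ hψC1 hφ ((hq i t).sub (hq j t))
    have hkin := HasDerivAt.fun_sum (u := univ)
      (fun i (_ : i ∈ univ) => kinetic_deriv vhat (hqv i t))
    have hbar := HasDerivAt.fun_sum (u := univ)
      (fun i (_ : i ∈ univ) => HasDerivAt.fun_sum (u := univ)
        (fun n (_ : n ∈ univ) => barrier_deriv ψb φb hψbC1 hφb (A n) (b n) (hq i t)))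
    have hD := ((hpair.const_mul ((1:ℝ)/2)).add (hkin.const_mul ((1:ℝ)/2))).add hbar
    convert hD using 1
    · rfl
    · rfl
    · rfl
    have halg := energy_algebra
      (fun i j => φ ((1 / ε) * (Real.sqrt (1 + ε * ‖q i t - q j t‖ ^ 2) - 1)) *
        (Real.sqrt (1 + ε * ‖q i t - q j t‖ ^ 2))⁻¹)
      (fun i j => by simp only [norm_sub_rev (q i t) (q j t)])
      (fun i j => q i t - q j t)
      (fun i j => by simp only [neg_sub])
      (fun i => qv i t - vhat) A
      (fun i n => φb (⟪A n, q i t⟫ - b n)) K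
    refine Eq.trans halg.symm ?_
    congr 1
    · congr 1
      · refine congrArg _ (sum_congr rfl fun i _ => sum_congr rfl fun j _ => ?_)
        rw [sub_sub_sub_cancel_right, div_eq_mul_inv]
        ring
    · refine sum_congr rfl fun i _ => sum_congr rfl fun n _ => ?_
      have h : ⟪qv i t - vhat, A n⟫ = ⟪A n, qv i t⟫ := by
        rw [real_inner_comm, inner_sub_right, hvhat n, sub_zero]
      rw [h]
  -- Step 2: H is antitone
  have hanti : Antitone H := by
    apply antitone_of_deriv_nonpos (fun t => (key t).differentiableAt)
    intro t
    rw [(key t).deriv, neg_nonpos]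
    exact Finset.sum_nonneg fun i _ => mul_nonneg (hK i).le (sq_nonneg _)
  -- Step 3: conclude
  intro t ht i j hij
  by_contra hle
  push_neg at hle
  set r := ‖q i t - q j t‖ with hr
  have hσle : (1 / ε) * (Real.sqrt (1 + ε * r ^ 2) - 1)
      ≤ (1 / ε) * (Real.sqrt (1 + ε * dmin ^ 2) - 1) := by
    have hr2 : r ^ 2 ≤ dmin ^ 2 := pow_le_pow_left₀ (norm_nonneg _) hle 2
    have := Real.sqrt_le_sqrt (by nlinarith : 1 + ε * r ^ 2 ≤ 1 + ε * dmin ^ 2)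
    have h1ε : (0:ℝ) ≤ 1 / ε := by positivity
    nlinarith
  have hψle : ψ ((1 / ε) * (Real.sqrt (1 + ε * dmin ^ 2) - 1))
      ≤ ψ ((1 / ε) * (Real.sqrt (1 + ε * r ^ 2) - 1)) := hψanti hσle
  -- pair potential bounded by H t
  have hbound : ψ ((1 / ε) * (Real.sqrt (1 + ε * r ^ 2) - 1)) ≤ H t := by
    set g : Fin N → Fin N → ℝ := fun a c =>
      ψ ((1 / ε) * (Real.sqrt (1 + ε * ‖q a t - q c t‖ ^ 2) - 1)) with hg
    have h0 : ∀ a, (0:ℝ) ≤ ∑ c ∈ univ.erase a, g a c :=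
      fun a => Finset.sum_nonneg fun c _ => hψnn _
    have hij1 : g i j ≤ ∑ c ∈ univ.erase i, g i c :=
      Finset.single_le_sum (f := g i) (fun c _ => hψnn _)
        (Finset.mem_erase.2 ⟨Ne.symm hij, Finset.mem_univ _⟩)
    have hij2 : g j i ≤ ∑ c ∈ univ.erase j, g j c :=
      Finset.single_le_sum (f := g j) (fun c _ => hψnn _)
        (Finset.mem_erase.2 ⟨hij, Finset.mem_univ _⟩)
    have hpairsum : (∑ c ∈ univ.erase i, g i c) + (∑ c ∈ univ.erase j, g j c)
        ≤ ∑ a, ∑ c ∈ univ.erase a, g a c := by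
      have := Finset.sum_le_sum_of_subset_of_nonneg
        (Finset.subset_univ ({i, j} : Finset (Fin N)))
        (fun a _ _ => h0 a)
      rwa [Finset.sum_pair hij] at this
    have hgsymm : g i j = g j i := by simp only [hg]; rw [norm_sub_rev]
    have hk0 : (0:ℝ) ≤ ∑ a, ‖qv a t - vhat‖ ^ 2 :=
      Finset.sum_nonneg fun a _ => sq_nonneg _
    have hb0 : (0:ℝ) ≤ ∑ a, ∑ n, ψb (⟪A n, q a t⟫ - b n) :=
      Finset.sum_nonneg fun a _ => Finset.sum_nonneg fun n _ => hψbnn _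
    have : g i j ≤ (1/2) * ∑ a, ∑ c ∈ univ.erase a, g a c := by
      nlinarith [hij1, hij2, hpairsum, hgsymm]
    rw [hH t]
    calc ψ ((1 / ε) * (Real.sqrt (1 + ε * r ^ 2) - 1)) = g i j := by simp only [hg, hr]
      _ ≤ _ := by linarith
  have hmono : H t ≤ H t₀ := hanti ht
  rw [hc] at hmono
  linarith
end

section
/- (Theorem 1(v), boundary-clearance guarantee) Let 0 ≤ d_{b,min} < d̂_b. Along any solution of the closed-loop multi-sUAS system whose initial Hamiltonian satisfies H(t₀) = c < ψ_b(d_{b,min}), every agent maintains more than the minimum boundary clearance: d_{in}(t) > d_{b,min} for all t ≥ t₀, all agents i, and all boundary planes n = 1,…,m. -/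
open Finset RealInnerProductSpace

private lemma sum_erase_comm' {α : Type*} [Fintype α] [DecidableEq α] (f : α → α → ℝ) :
    ∑ i, ∑ j ∈ Finset.univ.erase i, f i j = ∑ j, ∑ i ∈ Finset.univ.erase j, f i j :=
  Finset.sum_comm' (fun x y => by simp [ne_comm, eq_comm])

private lemma hasDerivAt_sigma' {E : Type*} [NormedAddCommGroup E] [InnerProductSpace ℝ E]
    {ε : ℝ} (hε : 0 < ε) {x : ℝ → E} {x' : E} {t : ℝ} (hx : HasDerivAt x x' t) :
    HasDerivAt (fun s => (1 / ε) * (Real.sqrt (1 + ε * ‖x s‖ ^ 2) - 1))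
      (⟪x t, x'⟫ * (Real.sqrt (1 + ε * ‖x t‖ ^ 2))⁻¹) t := by
  have key : ∀ s, 0 < 1 + ε * ‖x s‖ ^ 2 := fun s => by positivity
  have hn : HasDerivAt (fun s => ‖x s‖ ^ 2) (2 * ⟪x t, x'⟫) t := by
    have h0 : (fun s => ‖x s‖ ^ 2) = fun s => ⟪x s, x s⟫ := by
      funext s; rw [real_inner_self_eq_norm_sq]
    rw [h0]
    have := hx.inner ℝ hx
    simpa [real_inner_comm, two_mul] using this
  have hu : HasDerivAt (fun s => 1 + ε * ‖x s‖ ^ 2) (ε * (2 * ⟪x t, x'⟫)) t :=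
    (hn.const_mul ε).const_add 1
  have hs0 : Real.sqrt (1 + ε * ‖x t‖ ^ 2) ≠ 0 := by positivity
  have hsq : HasDerivAt (fun s => Real.sqrt (1 + ε * ‖x s‖ ^ 2))
      ((1 / (2 * Real.sqrt (1 + ε * ‖x t‖ ^ 2))) * (ε * (2 * ⟪x t, x'⟫))) t :=
    (Real.hasDerivAt_sqrt (key t).ne').comp t hu
  have := (hsq.sub_const 1).const_mul (1 / ε)
  refine this.congr_deriv ?_
  have hεi : ε * ε⁻¹ = 1 := mul_inv_cancel₀ hε.ne'
  linear_combination (⟪x t, x'⟫ * (Real.sqrt (1 + ε * ‖x t‖ ^ 2))⁻¹) * hεi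

private lemma hasDerivAt_comp_scalar {ψ φ : ℝ → ℝ} (hψC1 : ContDiff ℝ 1 ψ)
    (hφ : deriv ψ = φ) {g : ℝ → ℝ} {g' : ℝ} {t : ℝ} (hg : HasDerivAt g g' t) :
    HasDerivAt (fun s => ψ (g s)) (φ (g t) * g') t := by
  have h1 : HasDerivAt ψ (φ (g t)) (g t) := by
    rw [← hφ]
    exact ((hψC1.differentiable one_ne_zero) (g t)).hasDerivAt
  exact h1.comp t hg


set_option maxHeartbeats 1600000

/-- Theorem 1(v), boundary-clearance guarantee: with
`0 ≤ d_{b,min} < d̂_b`, if the initial Hamiltonian satisfies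
`H(t₀) = c < ψ_b(d_{b,min})`, then every agent maintains more than the minimum
boundary clearance: `d_{in}(t) > d_{b,min}` for all `t ≥ t₀`, all agents `i`,
and all boundary planes `n`. -/
theorem boundary_clearance_guarantee
    (N m : ℕ) (ε : ℝ) (hε : 0 < ε)
    -- agent positions and velocities
    (q qv : Fin N → ℝ → EuclideanSpace ℝ (Fin 3))
    -- boundary planes
    (A : Fin m → EuclideanSpace ℝ (Fin 3)) (b : Fin m → ℝ)
    (hA : ∀ n, ‖A n‖ = 1)
    -- reference velocity, parallel to every boundary plane
    (vhat : EuclideanSpace ℝ (Fin 3)) (hvhat : ∀ n, ⟪A n, vhat⟫ = 0)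
    -- potential functions
    (dhat dbhat : ℝ) (ψ ψb φ φb : ℝ → ℝ)
    (hψnn : ∀ d, 0 ≤ ψ d) (hψanti : Antitone ψ)
    (hψC1 : ContDiff ℝ 1 ψ) (hφ : deriv ψ = φ)
    (hψ0 : ∀ d, ψ d = 0 ↔ dhat ≤ d) (hψpos : ∀ d, 0 < ψ d ↔ d < dhat)
    (hψbnn : ∀ d, 0 ≤ ψb d) (hψbanti : Antitone ψb)
    (hψbC1 : ContDiff ℝ 1 ψb) (hφb : deriv ψb = φb)
    (hψb0 : ∀ d, ψb d = 0 ↔ dbhat ≤ d) (hψbpos : ∀ d, 0 < ψb d ↔ d < dbhat)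
    -- damping gains
    (K : Fin N → ℝ) (hK : ∀ i, 0 < K i)
    -- closed-loop double-integrator dynamics  q̈ᵢ = uᵢ
    (hq : ∀ i t, HasDerivAt (q i) (qv i t) t)
    (hqv : ∀ i t, HasDerivAt (qv i)
      (-(∑ j ∈ univ.erase i,
          (φ ((1 / ε) * (Real.sqrt (1 + ε * ‖q i t - q j t‖ ^ 2) - 1)) *
            (Real.sqrt (1 + ε * ‖q i t - q j t‖ ^ 2))⁻¹) • (q i t - q j t))
        - (∑ n, φb (⟪A n, q i t⟫ - b n) • A n)
        - K i • (qv i t - vhat)) t)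
    -- the Hamiltonian  H = V_p + V_k + V_b
    (t₀ : ℝ) (H : ℝ → ℝ)
    (hH : ∀ t, H t =
      (1 / 2) * ∑ i, ∑ j ∈ univ.erase i,
          ψ ((1 / ε) * (Real.sqrt (1 + ε * ‖q i t - q j t‖ ^ 2) - 1))
      + (1 / 2) * ∑ i, ‖qv i t - vhat‖ ^ 2
      + ∑ i, ∑ n, ψb (⟪A n, q i t⟫ - b n))
    -- minimum boundary clearance and initial-energy sublevel condition
    (dbmin c : ℝ) (hdbmin0 : 0 ≤ dbmin) (hdbmin : dbmin < dbhat)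
    (hc : H t₀ = c) (hcs : c < ψb dbmin) :
    ∀ t, t₀ ≤ t → ∀ i : Fin N, ∀ n : Fin m, dbmin < ⟪A n, q i t⟫ - b n := by
  classical
  -- abbreviations (as plain functions)
  let a : Fin N → ℝ → EuclideanSpace ℝ (Fin 3) := fun i t =>
    -(∑ j ∈ univ.erase i,
          (φ ((1 / ε) * (Real.sqrt (1 + ε * ‖q i t - q j t‖ ^ 2) - 1)) *
            (Real.sqrt (1 + ε * ‖q i t - q j t‖ ^ 2))⁻¹) • (q i t - q j t))
        - (∑ n, φb (⟪A n, q i t⟫ - b n) • A n)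
        - K i • (qv i t - vhat)
  let cc : Fin N → Fin N → ℝ → ℝ := fun i j t =>
    φ ((1 / ε) * (Real.sqrt (1 + ε * ‖q i t - q j t‖ ^ 2) - 1)) *
      (Real.sqrt (1 + ε * ‖q i t - q j t‖ ^ 2))⁻¹
  have hHfun : H = fun t =>
      (1 / 2) * ∑ i, ∑ j ∈ univ.erase i,
          ψ ((1 / ε) * (Real.sqrt (1 + ε * ‖q i t - q j t‖ ^ 2) - 1))
      + (1 / 2) * ∑ i, ‖qv i t - vhat‖ ^ 2
      + ∑ i, ∑ n, ψb (⟪A n, q i t⟫ - b n) := funext hH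
  -- the raw derivative of H
  have hD : ∀ t, HasDerivAt H
      ((1 / 2) * ∑ i, ∑ j ∈ univ.erase i,
          φ ((1 / ε) * (Real.sqrt (1 + ε * ‖q i t - q j t‖ ^ 2) - 1)) *
            (⟪q i t - q j t, qv i t - qv j t⟫ *
              (Real.sqrt (1 + ε * ‖q i t - q j t‖ ^ 2))⁻¹)
        + (1 / 2) * ∑ i, (2 * ⟪qv i t - vhat, a i t⟫)
        + ∑ i, ∑ n, φb (⟪A n, q i t⟫ - b n) * ⟪A n, qv i t⟫) t := by
    intro t
    rw [hHfun]
    have hVp : HasDerivAt (fun s => ∑ i, ∑ j ∈ univ.erase i,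
        ψ ((1 / ε) * (Real.sqrt (1 + ε * ‖q i s - q j s‖ ^ 2) - 1)))
        (∑ i, ∑ j ∈ univ.erase i,
          φ ((1 / ε) * (Real.sqrt (1 + ε * ‖q i t - q j t‖ ^ 2) - 1)) *
            (⟪q i t - q j t, qv i t - qv j t⟫ *
              (Real.sqrt (1 + ε * ‖q i t - q j t‖ ^ 2))⁻¹)) t := by
      refine HasDerivAt.fun_sum fun i _ => HasDerivAt.fun_sum fun j _ => ?_
      exact hasDerivAt_comp_scalar hψC1 hφ (hasDerivAt_sigma' hε ((hq i t).sub (hq j t)))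
    have hVk : HasDerivAt (fun s => ∑ i, ‖qv i s - vhat‖ ^ 2)
        (∑ i, (2 * ⟪qv i t - vhat, a i t⟫)) t := by
      refine HasDerivAt.fun_sum fun i _ => ?_
      have h0 : (fun s => ‖qv i s - vhat‖ ^ 2) = fun s => ⟪qv i s - vhat, qv i s - vhat⟫ := by
        funext s; rw [real_inner_self_eq_norm_sq]
      rw [h0]
      have hw : HasDerivAt (fun s => qv i s - vhat) (a i t) t := (hqv i t).sub_const vhat
      have h2' := hw.inner ℝ hw
      refine h2'.congr_deriv ?_
      rw [real_inner_comm (a i t) (qv i t - vhat)]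
      ring
    have hVb : HasDerivAt (fun s => ∑ i, ∑ n, ψb (⟪A n, q i s⟫ - b n))
        (∑ i, ∑ n, φb (⟪A n, q i t⟫ - b n) * ⟪A n, qv i t⟫) t := by
      refine HasDerivAt.fun_sum fun i _ => HasDerivAt.fun_sum fun n _ => ?_
      have hd : HasDerivAt (fun s => ⟪A n, q i s⟫ - b n) (⟪A n, qv i t⟫) t := by
        have := ((hasDerivAt_const t (A n)).inner ℝ (hq i t)).sub_const (b n)
        simpa using this
      exact hasDerivAt_comp_scalar hψbC1 hφb hd
    exact ((hVp.const_mul (1/2 : ℝ)).add (hVk.const_mul (1/2 : ℝ))).add hVb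
  -- the raw derivative simplifies to the dissipation term
  have hDval : ∀ t,
      (1 / 2) * ∑ i, ∑ j ∈ univ.erase i,
          φ ((1 / ε) * (Real.sqrt (1 + ε * ‖q i t - q j t‖ ^ 2) - 1)) *
            (⟪q i t - q j t, qv i t - qv j t⟫ *
              (Real.sqrt (1 + ε * ‖q i t - q j t‖ ^ 2))⁻¹)
        + (1 / 2) * ∑ i, (2 * ⟪qv i t - vhat, a i t⟫)
        + ∑ i, ∑ n, φb (⟪A n, q i t⟫ - b n) * ⟪A n, qv i t⟫
      = -(∑ i, K i * ‖qv i t - vhat‖ ^ 2) := by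
    intro t
    set w : Fin N → EuclideanSpace ℝ (Fin 3) := fun i => qv i t - vhat with hwdef
    set X : Fin N → Fin N → EuclideanSpace ℝ (Fin 3) := fun i j => q i t - q j t with hXdef
    have hccsymm : ∀ i j, cc j i t = cc i j t := by
      intro i j; simp only [cc, norm_sub_rev (q j t)]
    have hXanti : ∀ i j, X j i = -X i j := by intro i j; simp [X, neg_sub]
    -- the potential-gradient cross sum
    set T : ℝ := ∑ i, ∑ j ∈ univ.erase i, cc i j t * ⟪X i j, w i⟫ with hTdef
    set B : ℝ := ∑ i, ∑ n, φb (⟪A n, q i t⟫ - b n) * ⟪A n, qv i t⟫ with hBdef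
    have hswap : ∑ i, ∑ j ∈ univ.erase i, cc i j t * ⟪X i j, w j⟫ = -T := by
      rw [sum_erase_comm' (f := fun i j => cc i j t * ⟪X i j, w j⟫), hTdef, ← Finset.sum_neg_distrib]
      refine Finset.sum_congr rfl fun j _ => ?_
      rw [← Finset.sum_neg_distrib]
      refine Finset.sum_congr rfl fun i _ => ?_
      rw [hccsymm j i, hXanti j i]  -- careful direction
      rw [inner_neg_left]
      ring
    -- first summand equals T
    have h1 : (1 / 2) * ∑ i, ∑ j ∈ univ.erase i,
          φ ((1 / ε) * (Real.sqrt (1 + ε * ‖q i t - q j t‖ ^ 2) - 1)) *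
            (⟪q i t - q j t, qv i t - qv j t⟫ *
              (Real.sqrt (1 + ε * ‖q i t - q j t‖ ^ 2))⁻¹) = T := by
      have expand : ∀ i j,
          φ ((1 / ε) * (Real.sqrt (1 + ε * ‖q i t - q j t‖ ^ 2) - 1)) *
            (⟪q i t - q j t, qv i t - qv j t⟫ *
              (Real.sqrt (1 + ε * ‖q i t - q j t‖ ^ 2))⁻¹)
          = cc i j t * ⟪X i j, w i⟫ - cc i j t * ⟪X i j, w j⟫ := by
        intro i j
        have : qv i t - qv j t = w i - w j := by simp [w]
        rw [this, inner_sub_right]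
        simp only [cc, X]
        ring
      calc (1 / 2) * ∑ i, ∑ j ∈ univ.erase i,
          φ ((1 / ε) * (Real.sqrt (1 + ε * ‖q i t - q j t‖ ^ 2) - 1)) *
            (⟪q i t - q j t, qv i t - qv j t⟫ *
              (Real.sqrt (1 + ε * ‖q i t - q j t‖ ^ 2))⁻¹)
          = (1 / 2) * ∑ i, ∑ j ∈ univ.erase i,
              (cc i j t * ⟪X i j, w i⟫ - cc i j t * ⟪X i j, w j⟫) := by
            congr 1
            exact Finset.sum_congr rfl fun i _ => Finset.sum_congr rfl fun j _ => expand i j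
        _ = (1 / 2) * (T - (-T)) := by
            rw [hTdef]
            congr 1
            rw [← hswap, ← Finset.sum_sub_distrib]
            exact Finset.sum_congr rfl fun i _ => Finset.sum_sub_distrib _ _
        _ = T := by ring
    -- inner products with the accelerations
    have h2 : ∀ i, ⟪w i, a i t⟫ =
        -(∑ j ∈ univ.erase i, cc i j t * ⟪X i j, w i⟫)
        - (∑ n, φb (⟪A n, q i t⟫ - b n) * ⟪A n, qv i t⟫)
        - K i * ‖w i‖ ^ 2 := by
      intro i
      have hS2 : ∀ n : Fin m, ⟪qv i t - vhat, A n⟫ = ⟪A n, qv i t⟫ := by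
        intro n; rw [real_inner_comm, inner_sub_right, hvhat n, sub_zero]
      have hS1 : ∀ j : Fin N, ⟪qv i t - vhat, q i t - q j t⟫ = ⟪q i t - q j t, qv i t - vhat⟫ :=
        fun j => real_inner_comm _ _
      simp only [hwdef, hXdef, a, cc, inner_sub_right, inner_neg_right, inner_sum,
        real_inner_smul_right, hS2, hS1, real_inner_self_eq_norm_sq]
      rw [← inner_sub_right, real_inner_self_eq_norm_sq]
    have h3 : (1 / 2) * ∑ i, (2 * ⟪w i, a i t⟫)
        = -T - B - ∑ i, K i * ‖w i‖ ^ 2 := by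
      calc (1 / 2) * ∑ i, (2 * ⟪w i, a i t⟫)
          = ∑ i, ⟪w i, a i t⟫ := by
            rw [Finset.mul_sum]
            exact Finset.sum_congr rfl fun i _ => by ring
        _ = ∑ i, (-(∑ j ∈ univ.erase i, cc i j t * ⟪X i j, w i⟫)
            - (∑ n, φb (⟪A n, q i t⟫ - b n) * ⟪A n, qv i t⟫) - K i * ‖w i‖ ^ 2) :=
            Finset.sum_congr rfl fun i _ => h2 i
        _ = -T - B - ∑ i, K i * ‖w i‖ ^ 2 := by
            rw [Finset.sum_sub_distrib, Finset.sum_sub_distrib, Finset.sum_neg_distrib,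
              hTdef, hBdef]
    rw [h1, h3]
    ring
  -- H is antitone
  have hmono : Antitone H := by
    refine antitone_of_deriv_nonpos (fun s => (hD s).differentiableAt) fun s => ?_
    rw [(hD s).deriv, hDval s]
    refine neg_nonpos.mpr (Finset.sum_nonneg fun i _ => mul_nonneg (hK i).le (sq_nonneg _))
  -- conclude
  intro t ht i n
  by_contra hcon
  push_neg at hcon
  have hb1 : ψb dbmin ≤ ψb (⟪A n, q i t⟫ - b n) := hψbanti hcon
  have hb2 : ψb (⟪A n, q i t⟫ - b n) ≤ H t := by
    rw [hH t]
    have e1 : ψb (⟪A n, q i t⟫ - b n) ≤ ∑ n', ψb (⟪A n', q i t⟫ - b n') :=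
      Finset.single_le_sum (f := fun n' => ψb (⟪A n', q i t⟫ - b n'))
        (fun n' _ => hψbnn _) (Finset.mem_univ n)
    have e2 : (∑ n', ψb (⟪A n', q i t⟫ - b n')) ≤
        ∑ i', ∑ n', ψb (⟪A n', q i' t⟫ - b n') :=
      Finset.single_le_sum (f := fun i' => ∑ n', ψb (⟪A n', q i' t⟫ - b n'))
        (fun i' _ => Finset.sum_nonneg fun n' _ => hψbnn _) (Finset.mem_univ i)
    have e3 : (0:ℝ) ≤ (1 / 2) * ∑ i', ∑ j ∈ univ.erase i',
        ψ ((1 / ε) * (Real.sqrt (1 + ε * ‖q i' t - q j t‖ ^ 2) - 1)) := by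
      refine mul_nonneg (by norm_num) (Finset.sum_nonneg fun i' _ =>
        Finset.sum_nonneg fun j _ => hψnn _)
    have e4 : (0:ℝ) ≤ (1 / 2) * ∑ i', ‖qv i' t - vhat‖ ^ 2 :=
      mul_nonneg (by norm_num) (Finset.sum_nonneg fun i' _ => sq_nonneg _)
    linarith
  have hHt : H t ≤ H t₀ := hmono ht
  linarith
end

section
/- (Theorem 2, convergence rate for the gradient Hamiltonian system) Under Assumptions 1 and 2, if Ψ(q(0)), ∇Ψ(q(0)) and q̇(0) are finite, then for every t > 0: inf_{τ ∈ (0,t)} [ p‖∇Ψ(q(τ))‖² + r‖q̇(τ)‖² ] ≤ (1/t) ( (1/2)‖α∇Ψ(q(0)) + q̇(0)‖² + (αK + 1)Ψ(q(0)) ), where p = (2KL − K²)/(4L²), r = K/4, and α = K/(2L). -/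
open scoped RealInnerProductSpace


theorem grad_sq_le_aux {n : ℕ} {L : ℝ} (hL : 0 < L)
    {Ψ : EuclideanSpace ℝ (Fin n) → ℝ} (hΨd : Differentiable ℝ Ψ)
    (hΨnn : ∀ x, 0 ≤ Ψ x)
    (hLip : LipschitzWith (Real.toNNReal L) (gradient Ψ)) (x : EuclideanSpace ℝ (Fin n)) :
    ‖gradient Ψ x‖ ^ 2 ≤ 2 * L * Ψ x := by
  set g := gradient Ψ x with hg
  set d : EuclideanSpace ℝ (Fin n) := -(L⁻¹ • g) with hd
  have hLipR : ∀ a b, ‖gradient Ψ a - gradient Ψ b‖ ≤ L * ‖a - b‖ := by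
    intro a b
    have := hLip.dist_le_mul a b
    simpa [dist_eq_norm, Real.coe_toNNReal L hL.le] using this
  -- φ s = Ψ (x + s•d) - s ⟪g,d⟫ - L/2 s² ‖d‖²
  set φ : ℝ → ℝ := fun s => Ψ (x + s • d) - s * ⟪g, d⟫ - L / 2 * s ^ 2 * ‖d‖ ^ 2 with hφ
  have hline : ∀ s : ℝ, HasDerivAt (fun u : ℝ => x + u • d) d s := fun s => by
    simpa using ((hasDerivAt_id s).smul_const d).const_add x
  have hφ' : ∀ s : ℝ, HasDerivAt φ
      (⟪gradient Ψ (x + s • d), d⟫ - ⟪g, d⟫ - L / 2 * (2 * s) * ‖d‖ ^ 2) s := by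
    intro s
    have h1 : HasDerivAt (fun u : ℝ => Ψ (x + u • d)) ⟪gradient Ψ (x + s • d), d⟫ s := by
      have := (hΨd _).hasGradientAt.hasFDerivAt.comp_hasDerivAt s (hline s)
      rw [InnerProductSpace.toDual_apply_apply] at this
      exact this
    have h2 : HasDerivAt (fun u : ℝ => u * ⟪g, d⟫) ⟪g, d⟫ s := by
      simpa using (hasDerivAt_id s).mul_const ⟪g, d⟫
    have h3 : HasDerivAt (fun u : ℝ => L / 2 * u ^ 2 * ‖d‖ ^ 2) (L / 2 * (2 * s) * ‖d‖ ^ 2) s := by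
      have := ((hasDerivAt_pow 2 s).const_mul (L / 2)).mul_const (‖d‖ ^ 2)
      simpa [mul_comm, mul_assoc, mul_left_comm] using this
    exact (h1.sub h2).sub h3
  have hanti : AntitoneOn φ (Set.Icc 0 1) := by
    apply antitoneOn_of_deriv_nonpos (convex_Icc 0 1)
    · exact Continuous.continuousOn (by
        have : Continuous φ := by
          apply Continuous.sub (Continuous.sub ?_ (by fun_prop)) (by fun_prop)
          exact hΨd.continuous.comp (by fun_prop)
        exact this)
    · intro s hs
      exact ((hφ' s).differentiableAt).differentiableWithinAt
    · intro s hs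
      rw [interior_Icc] at hs
      rw [(hφ' s).deriv]
      have hb : ⟪gradient Ψ (x + s • d) - g, d⟫ ≤ L * s * ‖d‖ ^ 2 := by
        calc ⟪gradient Ψ (x + s • d) - g, d⟫ ≤ ‖gradient Ψ (x + s • d) - g‖ * ‖d‖ :=
              real_inner_le_norm _ _
          _ ≤ (L * ‖(x + s • d) - x‖) * ‖d‖ := by
              have := hLipR (x + s • d) x
              have hdn : (0:ℝ) ≤ ‖d‖ := norm_nonneg _
              nlinarith [this]
          _ = L * s * ‖d‖ ^ 2 := by
              have : ‖(x + s • d) - x‖ = s * ‖d‖ := by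
                simp [norm_smul, abs_of_pos hs.1]
              rw [this]; ring
      have := inner_sub_left (𝕜 := ℝ) (gradient Ψ (x + s • d)) g d
      nlinarith [this]
  have h01 := hanti (Set.left_mem_Icc.2 zero_le_one) (Set.right_mem_Icc.2 zero_le_one) zero_le_one
  have hφ0 : φ 0 = Ψ x := by simp [hφ]
  have hφ1 : φ 1 = Ψ (x + d) - ⟪g, d⟫ - L / 2 * ‖d‖ ^ 2 := by simp [hφ]
  have hnn := hΨnn (x + d)
  have hgd : ⟪g, d⟫ = -(L⁻¹ * ‖g‖ ^ 2) := by
    rw [hd]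
    rw [inner_neg_right, real_inner_smul_right, real_inner_self_eq_norm_sq]
  have hdd : ‖d‖ ^ 2 = L⁻¹ ^ 2 * ‖g‖ ^ 2 := by
    rw [hd, norm_neg, norm_smul]
    simp [abs_of_pos (inv_pos.2 hL), mul_pow]
  rw [hφ0, hφ1, hgd, hdd] at h01
  have hL' : L ≠ 0 := hL.ne'
  field_simp at h01
  have h02 := h01
  nlinarith [h02, hnn, mul_nonneg hL.le hnn, sq_nonneg L, mul_pos hL hL, mul_pos (mul_pos hL hL) hL]


set_option maxHeartbeats 1000000 in
set_option synthInstance.maxHeartbeats 400000 in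
theorem grad_ham_aux
    (n : ℕ) (K L : ℝ) (hK0 : 0 < K) (hL : 0 < L)
    (hKL : Real.sqrt (1 / (4 * L)) < K)
    (Ψ : EuclideanSpace ℝ (Fin n) → ℝ)
    (hΨ : ContDiff ℝ 2 Ψ) (hΨnn : ∀ x, 0 ≤ Ψ x)
    (hLip : LipschitzWith (Real.toNNReal L) (gradient Ψ))
    (hgradsq : ∀ x, ‖gradient Ψ x‖ ^ 2 ≤ 2 * L * Ψ x)
    (q qv qa : ℝ → EuclideanSpace ℝ (Fin n))
    (hq : ∀ t, HasDerivAt q (qv t) t)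
    (hqv : ∀ t, HasDerivAt qv (qa t) t)
    (hsys : ∀ t, qa t + K • qv t + gradient Ψ (q t) = 0)
    (p r α : ℝ)
    (hp : p = (2 * K * L - K ^ 2) / (4 * L ^ 2)) (hr : r = K / 4)
    (hα : α = K / (2 * L)) :
    ∀ t : ℝ, 0 < t →
      sInf ((fun τ => p * ‖gradient Ψ (q τ)‖ ^ 2 + r * ‖qv τ‖ ^ 2) ''
          Set.Ioo 0 t) ≤
        (1 / t) * ((1 / 2) * ‖α • gradient Ψ (q 0) + qv 0‖ ^ 2 +
          (α * K + 1) * Ψ (q 0)) := by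
  intro t ht
  have hα0 : 0 < α := by rw [hα]; positivity
  set g : ℝ → ℝ := fun τ => p * ‖gradient Ψ (q τ)‖ ^ 2 + r * ‖qv τ‖ ^ 2 with hgdef
  set E0 : ℝ := (1 / 2) * ‖α • gradient Ψ (q 0) + qv 0‖ ^ 2 + (α * K + 1) * Ψ (q 0) with hE0
  have hE0nn : 0 ≤ E0 := by
    rw [hE0]
    have := hΨnn (q 0)
    have h1 : (0:ℝ) ≤ ‖α • gradient Ψ (q 0) + qv 0‖ ^ 2 := sq_nonneg _
    nlinarith [mul_pos hα0 hK0]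
  have hRHSnn : (0:ℝ) ≤ (1 / t) * E0 := by positivity
  by_cases hbdd : BddBelow (g '' Set.Ioo 0 t)
  swap
  · rw [Real.sInf_of_not_bddBelow hbdd]; exact hRHSnn
  -- differentiability infrastructure
  have hΨd : Differentiable ℝ Ψ := hΨ.differentiable (by norm_num)
  have hgradC : ContDiff ℝ 1 (gradient Ψ) := by
    have h1 : ContDiff ℝ 1 (fderiv ℝ Ψ) := hΨ.fderiv_right (by norm_num)
    exact (InnerProductSpace.toDual ℝ _).symm.contDiff.comp h1
  have hgradD : Differentiable ℝ (gradient Ψ) := hgradC.differentiable (by norm_num)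
  have hLcoe : ((Real.toNNReal L : NNReal) : ℝ) = L := Real.coe_toNNReal L hL.le
  set h : ℝ → EuclideanSpace ℝ (Fin n) := fun τ => gradient Ψ (q τ) with hh
  set h' : ℝ → EuclideanSpace ℝ (Fin n) :=
    fun τ => fderiv ℝ (gradient Ψ) (q τ) (qv τ) with hh'
  have hhD : ∀ τ, HasDerivAt h (h' τ) τ := fun τ =>
    (hgradD (q τ)).hasFDerivAt.comp_hasDerivAt τ (hq τ)
  have hh'le : ∀ τ, ‖h' τ‖ ≤ L * ‖qv τ‖ := by
    intro τ
    have h1 := ContinuousLinearMap.le_opNorm (fderiv ℝ (gradient Ψ) (q τ)) (qv τ)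
    have h2 : ‖fderiv ℝ (gradient Ψ) (q τ)‖ ≤ L := by
      simpa [hLcoe] using norm_fderiv_le_of_lipschitz ℝ hLip (x₀ := q τ)
    calc ‖h' τ‖ ≤ ‖fderiv ℝ (gradient Ψ) (q τ)‖ * ‖qv τ‖ := h1
      _ ≤ L * ‖qv τ‖ := by gcongr
  have hΨcomp : ∀ τ, HasDerivAt (fun s => Ψ (q s)) ⟪h τ, qv τ⟫ τ := fun τ => by
    have := (hΨd (q τ)).hasGradientAt.hasFDerivAt.comp_hasDerivAt τ (hq τ)
    rw [InnerProductSpace.toDual_apply_apply] at this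
    exact this
  -- the system rewritten
  have hqa : ∀ τ, qa τ = -(K • qv τ) - h τ := by
    intro τ
    have h0 : qa τ + (K • qv τ + h τ) = 0 := by rw [← add_assoc]; exact hsys τ
    have h1 := eq_neg_of_add_eq_zero_left h0
    rw [h1]; abel
  -- Lyapunov function
  set e : ℝ → ℝ := fun τ => α * ⟪h τ, qv τ⟫ + (1/2) * ⟪qv τ, qv τ⟫ + (α*K+1) * Ψ (q τ)
    with he
  set e' : ℝ → ℝ := fun τ => α * (⟪h τ, qa τ⟫ + ⟪h' τ, qv τ⟫)
      + (1/2) * (⟪qv τ, qa τ⟫ + ⟪qa τ, qv τ⟫) + (α*K+1) * ⟪h τ, qv τ⟫ with he'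
  have heD : ∀ τ, HasDerivAt e (e' τ) τ := by
    intro τ
    exact ((((hhD τ).inner ℝ (hqv τ)).const_mul α).add
      (((hqv τ).inner ℝ (hqv τ)).const_mul (1/2))).add ((hΨcomp τ).const_mul (α*K+1))
  -- derivative bound : e' τ ≤ - g τ
  have hkey : ∀ τ, e' τ ≤ - g τ := by
    intro τ
    have h1 : ⟪h τ, qa τ⟫ = -(K * ⟪h τ, qv τ⟫) - ‖h τ‖^2 := by
      rw [hqa τ, inner_sub_right, inner_neg_right, real_inner_smul_right,
        real_inner_self_eq_norm_sq]
    have h2 : ⟪qv τ, qa τ⟫ = -(K * ‖qv τ‖^2) - ⟪h τ, qv τ⟫ := by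
      rw [hqa τ, inner_sub_right, inner_neg_right, real_inner_smul_right,
        real_inner_self_eq_norm_sq, real_inner_comm]
    have h3 : ⟪qa τ, qv τ⟫ = -(K * ‖qv τ‖^2) - ⟪h τ, qv τ⟫ := by
      rw [real_inner_comm]; exact h2
    have h4 : ⟪h' τ, qv τ⟫ ≤ L * ‖qv τ‖ ^ 2 := by
      calc ⟪h' τ, qv τ⟫ ≤ ‖h' τ‖ * ‖qv τ‖ := real_inner_le_norm _ _
        _ ≤ (L * ‖qv τ‖) * ‖qv τ‖ := mul_le_mul_of_nonneg_right (hh'le τ) (norm_nonneg _)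
        _ = L * ‖qv τ‖ ^ 2 := by ring
    have hpa : p ≤ α := by
      rw [hp, hα, div_le_div_iff₀ (by positivity) (by positivity)]
      nlinarith [sq_nonneg K, sq_nonneg L, mul_pos hL hL]
    have hid2 : α * (L * ‖qv τ‖^2) = K/2 * ‖qv τ‖^2 := by rw [hα]; field_simp
    have h5 : α * ⟪h' τ, qv τ⟫ ≤ α * (L * ‖qv τ‖^2) := by
      exact mul_le_mul_of_nonneg_left h4 hα0.le
    have h6 : p * ‖h τ‖^2 ≤ α * ‖h τ‖^2 := mul_le_mul_of_nonneg_right hpa (sq_nonneg _)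
    simp only [he', hgdef, h1, h2, h3]
    have hn2 : (0:ℝ) ≤ ‖qv τ‖ ^ 2 := sq_nonneg _
    nlinarith [h5, h6, hid2, hn2, hr, hK0]
  -- nonnegativity of e
  have hepos : ∀ τ, 0 ≤ e τ := by
    intro τ
    have h1 : α^2 * ‖h τ‖^2 ≤ α^2 * (2 * L * Ψ (q τ)) :=
      mul_le_mul_of_nonneg_left (hgradsq (q τ)) (sq_nonneg α)
    have hid : α^2 * (2 * L * Ψ (q τ)) = α * K * Ψ (q τ) := by rw [hα]; field_simp
    have h2 : -(‖h τ‖ * ‖qv τ‖) ≤ ⟪h τ, qv τ⟫ := by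
      have := abs_real_inner_le_norm (h τ) (qv τ)
      cases' abs_le.1 this with hl _
      linarith
    have h3 : ⟪qv τ, qv τ⟫ = ‖qv τ‖ ^ 2 := real_inner_self_eq_norm_sq _
    simp only [he, h3]
    nlinarith [sq_nonneg (α * ‖h τ‖ - ‖qv τ‖), hΨnn (q τ),
      mul_le_mul_of_nonneg_left h2 hα0.le, mul_pos hα0 hK0]
  -- the descent argument
  have hmle : ∀ τ ∈ Set.Ioo 0 t, sInf (g '' Set.Ioo 0 t) ≤ g τ := fun τ hτ =>
    csInf_le hbdd ⟨τ, hτ, rfl⟩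
  set m : ℝ := sInf (g '' Set.Ioo 0 t) with hm
  set φ : ℝ → ℝ := fun τ => e τ + m * τ with hφdef
  have hφD : ∀ τ, HasDerivAt φ (e' τ + m) τ := by
    intro τ
    have : HasDerivAt (fun s : ℝ => m * s) m τ := by
      simpa using (hasDerivAt_id τ).const_mul m
    exact (heD τ).add this
  have hanti : AntitoneOn φ (Set.Icc 0 t) := by
    apply antitoneOn_of_deriv_nonpos (convex_Icc 0 t)
    · exact fun τ _ => (hφD τ).continuousAt.continuousWithinAt
    · intro x hx; exact (hφD x).differentiableAt.differentiableWithinAt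
    · intro x hx
      rw [interior_Icc] at hx
      rw [(hφD x).deriv]
      have := hkey x
      have := hmle x hx
      linarith
  have hfin := hanti (Set.left_mem_Icc.2 ht.le) (Set.right_mem_Icc.2 ht.le) ht.le
  simp only [hφdef] at hfin
  have h5 : m * t ≤ e 0 := by
    have h6 := hepos t
    have : e t + m * t ≤ e 0 + m * 0 := hfin
    linarith
  have h7 : e 0 ≤ E0 := by
    have hns := norm_add_sq_real (α • gradient Ψ (q 0)) (qv 0)
    have h8 : ⟪α • gradient Ψ (q 0), qv 0⟫ = α * ⟪gradient Ψ (q 0), qv 0⟫ :=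
      real_inner_smul_left _ _ _
    have h9 : ‖α • gradient Ψ (q 0)‖^2 = α^2 * ‖gradient Ψ (q 0)‖^2 := by
      rw [norm_smul, mul_pow]
      simp [abs_of_pos hα0]
    have h3 : ⟪qv 0, qv 0⟫ = ‖qv 0‖ ^ 2 := real_inner_self_eq_norm_sq _
    simp only [he, hE0, h3, hh]
    nlinarith [sq_nonneg (α * ‖gradient Ψ (q 0)‖)]
  calc m = (1/t) * (m * t) := by field_simp
    _ ≤ (1/t) * E0 := by
        have h10 : (0:ℝ) ≤ 1/t := by positivity
        exact mul_le_mul_of_nonneg_left (h5.trans h7) h10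
/-- Theorem 2, convergence rate for the gradient Hamiltonian
system: under Assumptions 1 and 2, for every `t > 0`,
`inf_{τ ∈ (0,t)} [p‖∇Ψ(q(τ))‖² + r‖q̇(τ)‖²]
  ≤ (1/t)((1/2)‖α∇Ψ(q(0)) + q̇(0)‖² + (αK + 1)Ψ(q(0)))`,
where `p = (2KL − K²)/(4L²)`, `r = K/4`, `α = K/(2L)`. -/
theorem gradient_hamiltonian_convergence_rate
    (n : ℕ) (K L : ℝ) (hK0 : 0 < K) (hL : 0 < L)
    -- Assumption 2: K > √(1/(4L))
    (hKL : Real.sqrt (1 / (4 * L)) < K)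
    (Ψ : EuclideanSpace ℝ (Fin n) → ℝ)
    (hΨ : ContDiff ℝ 2 Ψ) (hΨnn : ∀ x, 0 ≤ Ψ x)
    -- Assumption 1: ∇Ψ is Lipschitz with constant L
    (hLip : LipschitzWith (Real.toNNReal L) (gradient Ψ))
    -- a solution of the gradient Hamiltonian system  q̈ + Kq̇ + ∇Ψ(q) = 0
    (q qv qa : ℝ → EuclideanSpace ℝ (Fin n))
    (hq : ∀ t, HasDerivAt q (qv t) t)
    (hqv : ∀ t, HasDerivAt qv (qa t) t)
    (hsys : ∀ t, qa t + K • qv t + gradient Ψ (q t) = 0)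
    (p r α : ℝ)
    (hp : p = (2 * K * L - K ^ 2) / (4 * L ^ 2)) (hr : r = K / 4)
    (hα : α = K / (2 * L)) :
    ∀ t : ℝ, 0 < t →
      sInf ((fun τ => p * ‖gradient Ψ (q τ)‖ ^ 2 + r * ‖qv τ‖ ^ 2) ''
          Set.Ioo 0 t) ≤
        (1 / t) * ((1 / 2) * ‖α • gradient Ψ (q 0) + qv 0‖ ^ 2 +
          (α * K + 1) * Ψ (q 0)) := by
  exact grad_ham_aux n K L hK0 hL hKL Ψ hΨ hΨnn hLip
    (grad_sq_le_aux hL (hΨ.differentiable (by norm_num)) hΨnn hLip)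
    q qv qa hq hqv hsys p r α hp hr hα
end

section
/- (Integral dissipation bound from the proof of Theorem 2) Under Assumptions 1 and 2, with p = (2KL − K²)/(4L²), r = K/4, and α = K/(2L), every solution of the gradient Hamiltonian system satisfies, for all t > 0: ∫₀ᵗ ( p‖∇Ψ(q(τ))‖² + r‖q̇(τ)‖² ) dτ ≤ (1/2)‖α∇Ψ(q(0)) + q̇(0)‖² + (αK + 1)Ψ(q(0)). -/
open InnerProductSpace intervalIntegral MeasureTheory

set_option maxHeartbeats 1000000

section aux
variable {E : Type*} [NormedAddCommGroup E] [InnerProductSpace ℝ E] [CompleteSpace E]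

/-- descent-lemma consequence: `‖∇Ψ x‖² ≤ 2 L Ψ x` for nonnegative `Ψ` with
`L`-Lipschitz gradient. -/
theorem grad_sq_le_two_mul_aux {L : ℝ} (hL : 0 < L) (Ψ : E → ℝ)
    (hd : Differentiable ℝ Ψ)
    (hΨnn : ∀ x, 0 ≤ Ψ x)
    (hLip : LipschitzWith (Real.toNNReal L) (gradient Ψ)) (x : E) :
    ‖gradient Ψ x‖ ^ 2 ≤ 2 * L * Ψ x := by
  set g : E → E := gradient Ψ with hg
  have hc : Continuous g := hLip.continuous
  set u : E := -(1/L) • g x with hu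
  have hpath : ∀ s : ℝ, HasDerivAt (fun s : ℝ => x + s • u) u s := by
    intro s
    simpa using ((hasDerivAt_id s).smul_const u).const_add x
  have hphi : ∀ s : ℝ, HasDerivAt (fun s : ℝ => Ψ (x + s • u))
      (inner ℝ (g (x + s • u)) u : ℝ) s := by
    intro s
    have h1 : HasGradientAt Ψ (g (x + s • u)) (x + s • u) := (hd _).hasGradientAt
    exact (hasGradientAt_iff_hasFDerivAt.1 h1).comp_hasDerivAt s (hpath s)
  have hpc : Continuous fun s : ℝ => x + s • u :=
    continuous_const.add (continuous_id.smul continuous_const)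
  have hcont : Continuous fun s : ℝ => (inner ℝ (g (x + s • u)) u : ℝ) :=
    (hc.comp hpc).inner continuous_const
  have hftc : Ψ (x + (1:ℝ) • u) - Ψ (x + (0:ℝ) • u) =
      ∫ s in (0:ℝ)..1, (inner ℝ (g (x + s • u)) u : ℝ) :=
    (integral_eq_sub_of_hasDerivAt (fun s _ => hphi s)
      (hcont.intervalIntegrable 0 1)).symm
  have hbd : ∀ s ∈ Set.Icc (0:ℝ) 1, (inner ℝ (g (x + s • u)) u : ℝ) ≤
      (inner ℝ (g x) u : ℝ) + L * ‖u‖^2 * s := by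
    intro s hs
    have h1 : (inner ℝ (g (x + s • u)) u : ℝ) - inner ℝ (g x) u =
        inner ℝ (g (x + s • u) - g x) u := by rw [inner_sub_left]
    have h2 : (inner ℝ (g (x + s • u) - g x) u : ℝ) ≤ ‖g (x + s • u) - g x‖ * ‖u‖ :=
      real_inner_le_norm _ _
    have h3 : ‖g (x + s • u) - g x‖ ≤ L * (s * ‖u‖) := by
      have h4 := hLip.dist_le_mul (x + s • u) x
      rw [dist_eq_norm, dist_eq_norm] at h4
      simp only [add_sub_cancel_left] at h4
      calc ‖g (x + s • u) - g x‖ ≤ Real.toNNReal L * ‖s • u‖ := h4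
        _ = L * (s * ‖u‖) := by
            rw [Real.coe_toNNReal _ hL.le, norm_smul, Real.norm_eq_abs,
              abs_of_nonneg hs.1]
    have h5 : ‖g (x + s • u) - g x‖ * ‖u‖ ≤ (L * (s * ‖u‖)) * ‖u‖ :=
      mul_le_mul_of_nonneg_right h3 (norm_nonneg u)
    have h6 : (L * (s * ‖u‖)) * ‖u‖ = L * ‖u‖^2 * s := by ring
    linarith [h1 ▸ h2]
  have hii : IntervalIntegrable (fun s : ℝ => L * ‖u‖^2 * s) volume 0 1 :=
    (continuous_const.mul continuous_id).intervalIntegrable 0 1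
  have hcont2 : Continuous fun s : ℝ => (inner ℝ (g x) u : ℝ) + L * ‖u‖^2 * s :=
    continuous_const.add (continuous_const.mul continuous_id)
  have hint : (∫ s in (0:ℝ)..1, (inner ℝ (g (x + s • u)) u : ℝ)) ≤
      ∫ s in (0:ℝ)..1, ((inner ℝ (g x) u : ℝ) + L * ‖u‖^2 * s) :=
    integral_mono_on (by norm_num) (hcont.intervalIntegrable 0 1)
      (hcont2.intervalIntegrable 0 1) hbd
  have hval : (∫ s in (0:ℝ)..1, ((inner ℝ (g x) u : ℝ) + L * ‖u‖^2 * s)) =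
      (inner ℝ (g x) u : ℝ) + L * ‖u‖^2 / 2 := by
    rw [integral_add intervalIntegrable_const hii, intervalIntegral.integral_const,
      intervalIntegral.integral_const_mul, integral_id]
    norm_num
    ring
  have key : Ψ (x + u) ≤ Ψ x + inner ℝ (g x) u + L * ‖u‖^2 / 2 := by
    have h7 := hftc
    simp only [one_smul, zero_smul, add_zero] at h7
    linarith [hval ▸ hint]
  have hgu : (inner ℝ (g x) u : ℝ) = -(1/L) * ‖g x‖^2 := by
    rw [hu, real_inner_smul_right, real_inner_self_eq_norm_sq]
  have hnu : ‖u‖^2 = (1/L)^2 * ‖g x‖^2 := by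
    rw [hu, norm_smul, mul_pow, Real.norm_eq_abs, abs_neg, abs_of_nonneg (by positivity)]
  have h0 := hΨnn (x + u)
  have hL2 : L ≠ 0 := hL.ne'
  have hfin : Ψ (x + u) ≤ Ψ x - ‖g x‖^2 / (2 * L) := by
    rw [hgu, hnu] at key
    have h8 : -(1/L) * ‖g x‖^2 + L * ((1/L)^2 * ‖g x‖^2) / 2 = - (‖g x‖^2 / (2*L)) := by
      field_simp
      ring
    linarith [key, h8]
  have h8 : ‖g x‖^2 / (2*L) ≤ Ψ x := by linarith
  have h9 := mul_le_mul_of_nonneg_left h8 (by positivity : (0:ℝ) ≤ 2*L)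
  rw [mul_div_cancel₀] at h9
  · exact h9
  · positivity

end aux

/-- integral dissipation bound from the proof of Theorem 2:
under Assumptions 1 and 2, with `p = (2KL − K²)/(4L²)`, `r = K/4`, `α = K/(2L)`,
every solution satisfies, for all `t > 0`,
`∫₀ᵗ (p‖∇Ψ(q(τ))‖² + r‖q̇(τ)‖²) dτ
  ≤ (1/2)‖α∇Ψ(q(0)) + q̇(0)‖² + (αK + 1)Ψ(q(0))`. -/
theorem gradient_hamiltonian_integral_dissipation
    (n : ℕ) (K L : ℝ) (hK0 : 0 < K) (hL : 0 < L)
    -- Assumption 2: K > √(1/(4L))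
    (hKL : Real.sqrt (1 / (4 * L)) < K)
    (Ψ : EuclideanSpace ℝ (Fin n) → ℝ)
    (hΨ : ContDiff ℝ 2 Ψ) (hΨnn : ∀ x, 0 ≤ Ψ x)
    -- Assumption 1: ∇Ψ is Lipschitz with constant L
    (hLip : LipschitzWith (Real.toNNReal L) (gradient Ψ))
    -- a solution of the gradient Hamiltonian system  q̈ + Kq̇ + ∇Ψ(q) = 0
    (q qv qa : ℝ → EuclideanSpace ℝ (Fin n))
    (hq : ∀ t, HasDerivAt q (qv t) t)
    (hqv : ∀ t, HasDerivAt qv (qa t) t)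
    (hsys : ∀ t, qa t + K • qv t + gradient Ψ (q t) = 0)
    (p r α : ℝ)
    (hp : p = (2 * K * L - K ^ 2) / (4 * L ^ 2)) (hr : r = K / 4)
    (hα : α = K / (2 * L)) :
    ∀ t : ℝ, 0 < t →
      (∫ τ in (0 : ℝ)..t, (p * ‖gradient Ψ (q τ)‖ ^ 2 + r * ‖qv τ‖ ^ 2)) ≤
        (1 / 2) * ‖α • gradient Ψ (q 0) + qv 0‖ ^ 2 + (α * K + 1) * Ψ (q 0) := by
  intro t ht
  have hL2 : L ≠ 0 := hL.ne'
  have hα0 : 0 ≤ α := by rw [hα]; positivity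
  set g : ℝ → EuclideanSpace ℝ (Fin n) := fun τ => gradient Ψ (q τ) with hgdef
  -- the gradient is C¹
  have hgc1 : ContDiff ℝ 1 (gradient Ψ) := by
    have h := hΨ.fderiv_right (m := 1) (by norm_num)
    exact ((toDual ℝ (EuclideanSpace ℝ (Fin n))).symm.toContinuousLinearEquiv :
      (EuclideanSpace ℝ (Fin n) →L[ℝ] ℝ) ≃L[ℝ] EuclideanSpace ℝ (Fin n)).contDiff.comp h
  have hgd : Differentiable ℝ (gradient Ψ) := hgc1.differentiable one_ne_zero
  set G : ℝ → EuclideanSpace ℝ (Fin n) := fun τ => fderiv ℝ (gradient Ψ) (q τ) (qv τ) with hGdef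
  have hgderiv : ∀ τ, HasDerivAt g (G τ) τ := fun τ =>
    ((hgd (q τ)).hasFDerivAt).comp_hasDerivAt τ (hq τ)
  have hGnorm : ∀ τ, ‖G τ‖ ≤ L * ‖qv τ‖ := by
    intro τ
    calc ‖G τ‖ ≤ ‖fderiv ℝ (gradient Ψ) (q τ)‖ * ‖qv τ‖ :=
          (fderiv ℝ (gradient Ψ) (q τ)).le_opNorm (qv τ)
      _ ≤ L * ‖qv τ‖ := by
          apply mul_le_mul_of_nonneg_right _ (norm_nonneg _)
          have h := norm_fderiv_le_of_lipschitz ℝ hLip (x₀ := q τ)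
          rwa [Real.coe_toNNReal _ hL.le] at h
  -- Lyapunov-type function
  set W : ℝ → ℝ := fun τ => (1/2) * (inner ℝ (α • g τ + qv τ) (α • g τ + qv τ) : ℝ)
      + (α*K+1) * Ψ (q τ) - (α^2/2) * (inner ℝ (g τ) (g τ) : ℝ) with hWdef
  set W' : ℝ → ℝ := fun τ => α * (inner ℝ (qv τ) (G τ) : ℝ)
      - α * (inner ℝ (g τ) (g τ) : ℝ) - K * (inner ℝ (qv τ) (qv τ) : ℝ) with hW'def
  have hW : ∀ τ, HasDerivAt W (W' τ) τ := by
    intro τ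
    have ha : qa τ = -(K • qv τ) - g τ := by
      have h := hsys τ
      rw [add_assoc, add_eq_zero_iff_eq_neg] at h
      rw [h, neg_add]
      simp only [hgdef, sub_eq_add_neg]
    have hu : HasDerivAt (fun s => α • g s + qv s) (α • G τ + qa τ) τ :=
      ((hgderiv τ).const_smul α).add (hqv τ)
    have h1 := HasDerivAt.inner ℝ hu hu
    have h2 : HasDerivAt (fun s => Ψ (q s)) (inner ℝ (g τ) (qv τ) : ℝ) τ := by
      have hga : HasGradientAt Ψ (g τ) (q τ) :=
        ((hΨ.differentiable (by norm_num)) (q τ)).hasGradientAt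
      exact (hasGradientAt_iff_hasFDerivAt.1 hga).comp_hasDerivAt τ (hq τ)
    have h3 := HasDerivAt.inner ℝ (hgderiv τ) (hgderiv τ)
    have h4 := ((h1.const_mul (1/2 : ℝ)).add (h2.const_mul (α*K+1))).sub
      (h3.const_mul (α^2/2))
    have h4' : HasDerivAt W _ τ := h4
    convert h4' using 1
    rw [ha]
    simp only [inner_add_left, inner_add_right, inner_smul_left, inner_smul_right,
      inner_sub_left, inner_sub_right, inner_neg_left, inner_neg_right,
      RCLike.conj_to_real, conj_trivial]
    linear_combination (-(α/2)) * real_inner_comm (qv τ) (G τ) +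
      (-((α*K+1)/2)) * real_inner_comm (qv τ) (g τ)
  -- the integrand
  set f : ℝ → ℝ := fun τ => p * ‖g τ‖^2 + r * ‖qv τ‖^2 with hfdef
  have hqc : Continuous q := by
    rw [continuous_iff_continuousAt]; exact fun τ => (hq τ).continuousAt
  have hvc : Continuous qv := by
    rw [continuous_iff_continuousAt]; exact fun τ => (hqv τ).continuousAt
  have hgc : Continuous g := hLip.continuous.comp hqc
  have hfc : Continuous f :=
    (continuous_const.mul (hgc.norm.pow 2)).add (continuous_const.mul (hvc.norm.pow 2))
  have hI : ∀ s, HasDerivAt (fun s => ∫ τ in (0:ℝ)..s, f τ) (f s) s := fun s =>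
    integral_hasDerivAt_right (hfc.intervalIntegrable 0 s)
      (hfc.stronglyMeasurableAtFilter volume (nhds s)) hfc.continuousAt
  have hF : ∀ s, HasDerivAt (fun s => W s + ∫ τ in (0:ℝ)..s, f τ) (W' s + f s) s :=
    fun s => (hW s).add (hI s)
  -- the derivative is nonpositive
  have hnonpos : ∀ s, W' s + f s ≤ 0 := by
    intro s
    have hvG : (inner ℝ (qv s) (G s) : ℝ) ≤ L * ‖qv s‖^2 := by
      calc (inner ℝ (qv s) (G s) : ℝ) ≤ ‖qv s‖ * ‖G s‖ := real_inner_le_norm _ _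
        _ ≤ ‖qv s‖ * (L * ‖qv s‖) :=
            mul_le_mul_of_nonneg_left (hGnorm s) (norm_nonneg _)
        _ = L * ‖qv s‖^2 := by ring
    have hgg : (inner ℝ (g s) (g s) : ℝ) = ‖g s‖^2 := real_inner_self_eq_norm_sq _
    have hvv : (inner ℝ (qv s) (qv s) : ℝ) = ‖qv s‖^2 := real_inner_self_eq_norm_sq _
    have hαL : α * L = K/2 := by rw [hα]; field_simp
    have hpα : p ≤ α := by
      rw [hp, hα]
      rw [div_le_div_iff₀ (by positivity) (by positivity)]
      nlinarith [sq_nonneg K, sq_nonneg L]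
    have h1 : α * (inner ℝ (qv s) (G s) : ℝ) ≤ (K/2) * ‖qv s‖^2 := by
      calc α * (inner ℝ (qv s) (G s) : ℝ) ≤ α * (L * ‖qv s‖^2) :=
            mul_le_mul_of_nonneg_left hvG hα0
        _ = (K/2) * ‖qv s‖^2 := by rw [← hαL]; ring
    have h2 : p * ‖g s‖^2 ≤ α * ‖g s‖^2 :=
      mul_le_mul_of_nonneg_right hpα (sq_nonneg _)
    simp only [hW'def, hfdef, hgg, hvv]
    have hrK : r = K/4 := hr
    nlinarith [sq_nonneg (‖qv s‖), hK0]
  have hanti : Antitone (fun s => W s + ∫ τ in (0:ℝ)..s, f τ) :=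
    antitone_of_hasDerivAt_nonpos hF hnonpos
  have hFt : W t + (∫ τ in (0:ℝ)..t, f τ) ≤ W 0 + ∫ τ in (0:ℝ)..0, f τ := hanti ht.le
  rw [intervalIntegral.integral_same] at hFt
  -- W t ≥ 0
  have hgsq : ∀ x, ‖gradient Ψ x‖^2 ≤ 2 * L * Ψ x :=
    grad_sq_le_two_mul_aux hL Ψ (hΨ.differentiable (by norm_num)) hΨnn hLip
  have hWt0 : 0 ≤ W t := by
    have h1 : (0:ℝ) ≤ inner ℝ (α • g t + qv t) (α • g t + qv t) :=
      real_inner_self_nonneg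
    have h2 : (inner ℝ (g t) (g t) : ℝ) = ‖g t‖^2 := real_inner_self_eq_norm_sq _
    have h3 : (α^2/2) * ‖g t‖^2 ≤ (α*K+1) * Ψ (q t) := by
      have h4 : ‖g t‖^2 ≤ 2 * L * Ψ (q t) := hgsq (q t)
      have hαL : α * L = K/2 := by rw [hα]; field_simp
      have h6 : α^2 * L ≤ α*K+1 := by
        have e1 : α^2*L = α*(α*L) := by ring
        rw [e1, hαL]
        have h7 : 0 ≤ α * K := mul_nonneg hα0 hK0.le
        linarith
      have h8 : (α^2/2) * ‖g t‖^2 ≤ (α^2/2) * (2*L*Ψ (q t)) :=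
        mul_le_mul_of_nonneg_left h4 (by positivity)
      have h9 : (α^2/2) * (2*L*Ψ (q t)) = (α^2*L) * Ψ (q t) := by ring
      have h10 : (α^2*L) * Ψ (q t) ≤ (α*K+1) * Ψ (q t) :=
        mul_le_mul_of_nonneg_right h6 (hΨnn (q t))
      linarith
    simp only [hWdef, h2]
    linarith
  -- conclude
  have hW0 : W 0 ≤ (1/2) * ‖α • gradient Ψ (q 0) + qv 0‖^2 + (α*K+1) * Ψ (q 0) := by
    have h1 : (inner ℝ (α • g 0 + qv 0) (α • g 0 + qv 0) : ℝ) =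
        ‖α • g 0 + qv 0‖^2 := real_inner_self_eq_norm_sq _
    have h2 : (inner ℝ (g 0) (g 0) : ℝ) = ‖g 0‖^2 := real_inner_self_eq_norm_sq _
    simp only [hWdef, h1, h2]
    have : (0:ℝ) ≤ (α^2/2) * ‖g 0‖^2 := by positivity
    simp only [hgdef]
    linarith
  have : (∫ τ in (0:ℝ)..t, f τ) ≤ W 0 - W t := by linarith
  calc (∫ τ in (0:ℝ)..t, (p * ‖gradient Ψ (q τ)‖ ^ 2 + r * ‖qv τ‖ ^ 2))
      = ∫ τ in (0:ℝ)..t, f τ := rfl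
    _ ≤ W 0 - W t := this
    _ ≤ W 0 := by linarith
    _ ≤ _ := hW0
end

section
/- (Proposition 1, O(1/t) decay of the Hamiltonian) Under Assumptions 1 and 2, suppose there exist positive constants α̲ and ᾱ such that along the trajectory q(t) one has α̲ Ψ(q(t)) ≤ ‖∇Ψ(q(t))‖² ≤ ᾱ Ψ(q(t)) for all t ≥ t₀. Then there exists a positive constant λ, depending only on K, L, α̲ and ᾱ, such that the energy H(t) = (1/2)‖q̇(t)‖² + Ψ(q(t)) satisfies H(t) ≤ (λ/(t − t₀)) H(t₀) for all t > t₀. -/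
open InnerProductSpace Real

local notation "⟪" x ", " y "⟫" => @inner ℝ _ _ x y

set_option maxHeartbeats 1000000 in
/-- Proposition 1, O(1/t) decay of the Hamiltonian: under
Assumptions 1 and 2, if along the trajectory
`α̲ Ψ(q(t)) ≤ ‖∇Ψ(q(t))‖² ≤ ᾱ Ψ(q(t))` for all `t ≥ t₀` with `α̲, ᾱ > 0`, then
there is `λ > 0`, depending only on `K, L, α̲, ᾱ`, such that the energy
`H(t) = (1/2)‖q̇(t)‖² + Ψ(q(t))` satisfies `H(t) ≤ (λ/(t − t₀)) H(t₀)` for all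
`t > t₀`. -/
theorem hamiltonian_O_one_over_t_decay
    (K L αlo αhi : ℝ) (hK0 : 0 < K) (hL : 0 < L)
    (hKL : Real.sqrt (1 / (4 * L)) < K)
    (hαlo : 0 < αlo) (hαhi : 0 < αhi) :
    ∃ lam : ℝ, 0 < lam ∧
      ∀ (n : ℕ) (Ψ : EuclideanSpace ℝ (Fin n) → ℝ)
        (q qv qa : ℝ → EuclideanSpace ℝ (Fin n)) (t₀ : ℝ),
        ContDiff ℝ 2 Ψ →
        (∀ x, 0 ≤ Ψ x) →
        LipschitzWith (Real.toNNReal L) (gradient Ψ) →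
        (∀ t, HasDerivAt q (qv t) t) →
        (∀ t, HasDerivAt qv (qa t) t) →
        (∀ t, qa t + K • qv t + gradient Ψ (q t) = 0) →
        (∀ t, t₀ ≤ t →
          αlo * Ψ (q t) ≤ ‖gradient Ψ (q t)‖ ^ 2 ∧
          ‖gradient Ψ (q t)‖ ^ 2 ≤ αhi * Ψ (q t)) →
        ∀ t, t₀ < t →
          (1 / 2) * ‖qv t‖ ^ 2 + Ψ (q t) ≤
            (lam / (t - t₀)) * ((1 / 2) * ‖qv t₀‖ ^ 2 + Ψ (q t₀)) := by
  -- abstract constants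
  obtain ⟨c, hc1, hcαhi, hc0⟩ : ∃ c : ℝ, 1 ≤ c ∧ αhi ≤ c ∧ 0 < c :=
    ⟨max 1 αhi, le_max_left _ _, le_max_right _ _,
      lt_of_lt_of_le one_pos (le_max_left _ _)⟩
  have hden : (0 : ℝ) < 2 * L + K ^ 2 := by positivity
  obtain ⟨ε, hε0, hε1, hεc⟩ :
      ∃ ε : ℝ, 0 < ε ∧ ε * (2 * L + K ^ 2) ≤ K ∧ ε * c ≤ 1 / 2 := by
    refine ⟨min (K / (2 * L + K ^ 2)) (1 / (2 * c)),
      lt_min (by positivity) (by positivity), ?_, ?_⟩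
    · calc min (K / (2 * L + K ^ 2)) (1 / (2 * c)) * (2 * L + K ^ 2)
          ≤ (K / (2 * L + K ^ 2)) * (2 * L + K ^ 2) := by
            gcongr; exact min_le_left _ _
        _ = K := by field_simp
    · calc min (K / (2 * L + K ^ 2)) (1 / (2 * c)) * c ≤ (1 / (2 * c)) * c := by
            gcongr; exact min_le_right _ _
        _ = 1 / 2 := by field_simp
  obtain ⟨μ, hμ0, hμK, hμε⟩ : ∃ μ : ℝ, 0 < μ ∧ μ ≤ K ∧ μ ≤ ε * αlo / 2 :=
    ⟨min K (ε * αlo / 2), lt_min hK0 (by positivity), min_le_left _ _, min_le_right _ _⟩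
  obtain ⟨ν, hν0, hν⟩ : ∃ ν : ℝ, 0 < ν ∧ 3 * ν = 2 * μ :=
    ⟨2 * μ / 3, by positivity, by ring⟩
  refine ⟨3 / ν, by positivity, ?_⟩
  intro n Ψ q qv qa t₀ hΨ hΨ0 hlip hq hqv heq hgb t ht
  -- opaque auxiliary functions
  obtain ⟨G, hG⟩ : ∃ G : ℝ → EuclideanSpace ℝ (Fin n),
      ∀ s, G s = gradient Ψ (q s) := ⟨_, fun _ => rfl⟩
  obtain ⟨H, hH⟩ : ∃ H : ℝ → ℝ,
      ∀ s, H s = (1 / 2) * ‖qv s‖ ^ 2 + Ψ (q s) := ⟨_, fun _ => rfl⟩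
  obtain ⟨V, hV⟩ : ∃ V : ℝ → ℝ,
      ∀ s, V s = H s + ε * ⟪qv s, G s⟫ := ⟨_, fun _ => rfl⟩
  have hGfun : G = fun s => gradient Ψ (q s) := funext hG
  have hΨd : Differentiable ℝ Ψ := hΨ.differentiable (by norm_num)
  -- gradient is C¹
  have hG1 : ContDiff ℝ 1 (gradient Ψ) := by
    have hfd : ContDiff ℝ 1 (fun x => fderiv ℝ Ψ x) := hΨ.fderiv_right (by norm_num)
    have h2 : ContDiff ℝ 1
        (fun x => (toDual ℝ (EuclideanSpace ℝ (Fin n))).symm (fderiv ℝ Ψ x)) :=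
      ((toDual ℝ (EuclideanSpace ℝ (Fin n))).symm.toContinuousLinearEquiv.toContinuousLinearMap.contDiff).comp hfd
    exact h2
  -- derivatives
  have hGd : ∀ s, HasDerivAt G (fderiv ℝ (gradient Ψ) (q s) (qv s)) s := by
    intro s
    rw [hGfun]
    exact ((hG1.differentiable one_ne_zero (q s)).hasFDerivAt).comp_hasDerivAt s (hq s)
  have hΨq : ∀ s, HasDerivAt (fun u => Ψ (q u)) ⟪G s, qv s⟫ s := by
    intro s
    have h1 := ((hΨd (q s)).hasGradientAt.hasFDerivAt).comp_hasDerivAt s (hq s)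
    rw [hG s]
    simpa [Function.comp_def, toDual_apply_apply] using h1
  have hVd : ∀ s, HasDerivAt V
      ((1 / 2) * (⟪qv s, qa s⟫ + ⟪qa s, qv s⟫) + ⟪G s, qv s⟫ +
        ε * (⟪qv s, fderiv ℝ (gradient Ψ) (q s) (qv s)⟫ + ⟪qa s, G s⟫)) s := by
    intro s
    have hsq : HasDerivAt (fun u => (1 / 2) * ‖qv u‖ ^ 2)
        ((1 / 2) * (⟪qv s, qa s⟫ + ⟪qa s, qv s⟫)) s := by
      have h1 : HasDerivAt (fun u => ⟪qv u, qv u⟫) (⟪qv s, qa s⟫ + ⟪qa s, qv s⟫) s :=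
        (hqv s).inner ℝ (hqv s)
      have h2 : (fun u => (1 / 2 : ℝ) * ‖qv u‖ ^ 2) = fun u => (1 / 2) * ⟪qv u, qv u⟫ := by
        funext u; rw [real_inner_self_eq_norm_sq]
      rw [h2]
      exact h1.const_mul _
    have hin : HasDerivAt (fun u => ⟪qv u, G u⟫)
        (⟪qv s, fderiv ℝ (gradient Ψ) (q s) (qv s)⟫ + ⟪qa s, G s⟫) s :=
      (hqv s).inner ℝ (hGd s)
    have hVfun : V = fun u => ((1 / 2) * ‖qv u‖ ^ 2 + Ψ (q u)) + ε * ⟪qv u, G u⟫ := by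
      funext u; rw [hV u, hH u]
    rw [hVfun]
    exact ((hsq.add (hΨq s)).add (hin.const_mul ε))
  -- pointwise norm facts
  have hfdle : ∀ x : EuclideanSpace ℝ (Fin n), ‖fderiv ℝ (gradient Ψ) x‖ ≤ L := by
    intro x
    have h1 := norm_fderiv_le_of_lipschitz ℝ (x₀ := x) hlip
    rwa [Real.coe_toNNReal L hL.le] at h1
  have hHnn : ∀ s, 0 ≤ H s := by
    intro s
    have h := hΨ0 (q s)
    have h2 : (0:ℝ) ≤ (1 / 2) * ‖qv s‖ ^ 2 := by positivity
    rw [hH s]; linarith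
  have habs : ∀ s, t₀ ≤ s → |⟪qv s, G s⟫| ≤ c * H s := by
    intro s hs
    have hg2 : ‖G s‖ ^ 2 ≤ αhi * Ψ (q s) := by rw [hG s]; exact (hgb s hs).2
    have h1 : |⟪qv s, G s⟫| ≤ ‖qv s‖ * ‖G s‖ := abs_real_inner_le_norm _ _
    have h2 : ‖qv s‖ * ‖G s‖ ≤ (1 / 2) * ‖qv s‖ ^ 2 + (1 / 2) * ‖G s‖ ^ 2 := by
      nlinarith [sq_nonneg (‖qv s‖ - ‖G s‖)]
    have hψ := hΨ0 (q s)
    have h3 : (1 / 2) * ‖qv s‖ ^ 2 + (1 / 2) * (αhi * Ψ (q s)) ≤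
        c * ((1 / 2) * ‖qv s‖ ^ 2 + Ψ (q s)) := by
      nlinarith [sq_nonneg ‖qv s‖]
    rw [hH s]
    linarith
  have hVH1 : ∀ s, t₀ ≤ s → V s ≤ (3 / 2) * H s := by
    intro s hs
    have h1 := habs s hs
    have h2 : ε * ⟪qv s, G s⟫ ≤ ε * (c * H s) :=
      mul_le_mul_of_nonneg_left ((le_abs_self _).trans h1) hε0.le
    have h3 : ε * (c * H s) ≤ (1 / 2) * H s := by
      nlinarith [mul_le_mul_of_nonneg_right hεc (hHnn s)]
    rw [hV s]
    linarith
  have hVH2 : ∀ s, t₀ ≤ s → H s ≤ 2 * V s := by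
    intro s hs
    have h1 := habs s hs
    have h2' : -(c * H s) ≤ ⟪qv s, G s⟫ := by
      have h := neg_abs_le ⟪qv s, G s⟫; linarith
    have h2 : ε * (-(c * H s)) ≤ ε * ⟪qv s, G s⟫ :=
      mul_le_mul_of_nonneg_left h2' hε0.le
    have h3 : ε * (c * H s) ≤ (1 / 2) * H s := by
      nlinarith [mul_le_mul_of_nonneg_right hεc (hHnn s)]
    have h4 := hV s
    nlinarith
  -- key derivative estimate
  have hkey : ∀ s, t₀ ≤ s →
      (1 / 2) * (⟪qv s, qa s⟫ + ⟪qa s, qv s⟫) + ⟪G s, qv s⟫ +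
        ε * (⟪qv s, fderiv ℝ (gradient Ψ) (q s) (qv s)⟫ + ⟪qa s, G s⟫) ≤ -ν * V s := by
    intro s hs
    have hqa : qa s = -(K • qv s) - G s := by
      rw [hG s]
      have h := heq s
      rw [add_assoc] at h
      have h2 := eq_neg_of_add_eq_zero_left h
      rw [h2, neg_add, ← sub_eq_add_neg]
    have hva : |⟪qv s, G s⟫| ≤ ‖qv s‖ * ‖G s‖ := abs_real_inner_le_norm _ _
    have hvv : ⟪qv s, qv s⟫ = ‖qv s‖ ^ 2 := real_inner_self_eq_norm_sq _
    have hgg : ⟪G s, G s⟫ = ‖G s‖ ^ 2 := real_inner_self_eq_norm_sq _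
    have hsymm : ⟪G s, qv s⟫ = ⟪qv s, G s⟫ := real_inner_comm _ _
    have h1 : ⟪qv s, qa s⟫ = -(K * ‖qv s‖ ^ 2) - ⟪qv s, G s⟫ := by
      rw [hqa, inner_sub_right, inner_neg_right, real_inner_smul_right, hvv]
    have h2 : ⟪qa s, qv s⟫ = -(K * ‖qv s‖ ^ 2) - ⟪qv s, G s⟫ := by
      rw [real_inner_comm]; exact h1
    have h3 : ⟪qa s, G s⟫ = -(K * ⟪qv s, G s⟫) - ‖G s‖ ^ 2 := by
      rw [hqa, inner_sub_left, inner_neg_left, real_inner_smul_left, hgg]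
    have h4 : ⟪qv s, fderiv ℝ (gradient Ψ) (q s) (qv s)⟫ ≤ L * ‖qv s‖ ^ 2 := by
      have hb : ‖fderiv ℝ (gradient Ψ) (q s) (qv s)‖ ≤ L * ‖qv s‖ :=
        le_trans ((fderiv ℝ (gradient Ψ) (q s)).le_opNorm (qv s))
          (mul_le_mul_of_nonneg_right (hfdle (q s)) (norm_nonneg _))
      calc ⟪qv s, fderiv ℝ (gradient Ψ) (q s) (qv s)⟫
          ≤ ‖qv s‖ * ‖fderiv ℝ (gradient Ψ) (q s) (qv s)‖ := real_inner_le_norm _ _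
        _ ≤ ‖qv s‖ * (L * ‖qv s‖) := mul_le_mul_of_nonneg_left hb (norm_nonneg _)
        _ = L * ‖qv s‖ ^ 2 := by ring
    have hg2lo : αlo * Ψ (q s) ≤ ‖G s‖ ^ 2 := by rw [hG s]; exact (hgb s hs).1
    have hψ := hΨ0 (q s)
    have hKa : -(ε * (K * ⟪qv s, G s⟫)) ≤
        ε * (K ^ 2 / 2) * ‖qv s‖ ^ 2 + (ε / 2) * ‖G s‖ ^ 2 := by
      have h5 : -⟪qv s, G s⟫ ≤ ‖qv s‖ * ‖G s‖ := by
        have h := neg_abs_le ⟪qv s, G s⟫; linarith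
      nlinarith [sq_nonneg (K * ‖qv s‖ - ‖G s‖),
        mul_le_mul_of_nonneg_left h5 (mul_pos hε0 hK0).le]
    have hco : ε * (L + K ^ 2 / 2) ≤ K / 2 := by nlinarith
    have hstep : (1 / 2) * (⟪qv s, qa s⟫ + ⟪qa s, qv s⟫) + ⟪G s, qv s⟫ +
        ε * (⟪qv s, fderiv ℝ (gradient Ψ) (q s) (qv s)⟫ + ⟪qa s, G s⟫)
        ≤ -(K / 2) * ‖qv s‖ ^ 2 - (ε / 2) * ‖G s‖ ^ 2 := by
      rw [h1, h2, h3, hsymm]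
      have h6 : ε * ⟪qv s, fderiv ℝ (gradient Ψ) (q s) (qv s)⟫ ≤ ε * (L * ‖qv s‖ ^ 2) :=
        mul_le_mul_of_nonneg_left h4 hε0.le
      nlinarith [sq_nonneg ‖qv s‖]
    have hμH : -(K / 2) * ‖qv s‖ ^ 2 - (ε / 2) * ‖G s‖ ^ 2 ≤ -μ * H s := by
      have h7 : (ε / 2) * (αlo * Ψ (q s)) ≤ (ε / 2) * ‖G s‖ ^ 2 :=
        mul_le_mul_of_nonneg_left hg2lo (by positivity)
      rw [hH s]
      nlinarith [sq_nonneg ‖qv s‖]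
    have hfin : -μ * H s ≤ -ν * V s := by
      have hVle := hVH1 s hs
      have hHs := hHnn s
      nlinarith
    linarith
  -- Gronwall via antitonicity of W = V * exp(ν (s - t₀))
  obtain ⟨W, hW⟩ : ∃ W : ℝ → ℝ,
      ∀ s, W s = V s * Real.exp (ν * (s - t₀)) := ⟨_, fun _ => rfl⟩
  have hWd : ∀ s, HasDerivAt W
      (((1 / 2) * (⟪qv s, qa s⟫ + ⟪qa s, qv s⟫) + ⟪G s, qv s⟫ +
        ε * (⟪qv s, fderiv ℝ (gradient Ψ) (q s) (qv s)⟫ + ⟪qa s, G s⟫)) *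
          Real.exp (ν * (s - t₀))
        + V s * (Real.exp (ν * (s - t₀)) * ν)) s := by
    intro s
    have h1 : HasDerivAt (fun u : ℝ => ν * (u - t₀)) ν s := by
      simpa using ((hasDerivAt_id s).sub_const t₀).const_mul ν
    have he : HasDerivAt (fun u => Real.exp (ν * (u - t₀)))
        (Real.exp (ν * (s - t₀)) * ν) s := by
      exact (Real.hasDerivAt_exp (ν * (s - t₀))).comp s h1
    have hWfun : W = fun u => V u * Real.exp (ν * (u - t₀)) := funext hW
    rw [hWfun]
    exact (hVd s).mul he
  have hanti : AntitoneOn W (Set.Ici t₀) := by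
    apply antitoneOn_of_deriv_nonpos (convex_Ici t₀)
    · exact fun s _ => ((hWd s).continuousAt).continuousWithinAt
    · intro s _
      exact (hWd s).differentiableAt.differentiableWithinAt
    · intro s hs
      rw [interior_Ici] at hs
      rw [(hWd s).deriv]
      have hk := hkey s (le_of_lt hs)
      have hexp : (0 : ℝ) < Real.exp (ν * (s - t₀)) := Real.exp_pos _
      have h9 : ((1 / 2) * (⟪qv s, qa s⟫ + ⟪qa s, qv s⟫) + ⟪G s, qv s⟫ +
          ε * (⟪qv s, fderiv ℝ (gradient Ψ) (q s) (qv s)⟫ + ⟪qa s, G s⟫)) *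
            Real.exp (ν * (s - t₀)) ≤ (-ν * V s) * Real.exp (ν * (s - t₀)) :=
        mul_le_mul_of_nonneg_right hk hexp.le
      nlinarith
  -- conclude
  have hWle : W t ≤ W t₀ := hanti Set.self_mem_Ici (le_of_lt ht) (le_of_lt ht)
  have hx0 : 0 < ν * (t - t₀) := by
    have h := sub_pos.mpr ht
    positivity
  have hVt : V t ≤ V t₀ * Real.exp (-(ν * (t - t₀))) := by
    have hWle' : V t * Real.exp (ν * (t - t₀)) ≤ V t₀ := by
      rw [hW t, hW t₀] at hWle
      simpa using hWle
    calc V t = (V t * Real.exp (ν * (t - t₀))) * Real.exp (-(ν * (t - t₀))) := by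
          rw [mul_assoc, ← Real.exp_add]; simp
      _ ≤ V t₀ * Real.exp (-(ν * (t - t₀))) :=
          mul_le_mul_of_nonneg_right hWle' (Real.exp_pos _).le
  have hexpinv : Real.exp (-(ν * (t - t₀))) ≤ 1 / (ν * (t - t₀)) := by
    rw [Real.exp_neg]
    have h1 : ν * (t - t₀) ≤ Real.exp (ν * (t - t₀)) := by
      linarith [Real.add_one_le_exp (ν * (t - t₀))]
    rw [one_div]
    exact inv_anti₀ hx0 h1
  have hHt0 : 0 ≤ H t₀ := hHnn t₀
  have hfinal : H t ≤ (3 / ν / (t - t₀)) * H t₀ := by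
    have h1 : H t ≤ 2 * V t := hVH2 t (le_of_lt ht)
    have h2 : V t₀ ≤ (3 / 2) * H t₀ := hVH1 t₀ le_rfl
    have h3 : V t ≤ (3 / 2) * H t₀ * Real.exp (-(ν * (t - t₀))) := by
      calc V t ≤ V t₀ * Real.exp (-(ν * (t - t₀))) := hVt
        _ ≤ (3 / 2) * H t₀ * Real.exp (-(ν * (t - t₀))) :=
            mul_le_mul_of_nonneg_right h2 (Real.exp_pos _).le
    have h4 : H t ≤ 3 * H t₀ * Real.exp (-(ν * (t - t₀))) := by linarith
    have h5 : 3 * H t₀ * Real.exp (-(ν * (t - t₀))) ≤ 3 * H t₀ * (1 / (ν * (t - t₀))) :=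
      mul_le_mul_of_nonneg_left hexpinv (by positivity)
    have h6 : 3 * H t₀ * (1 / (ν * (t - t₀))) = (3 / ν / (t - t₀)) * H t₀ := by
      have hts : t - t₀ ≠ 0 := ne_of_gt (sub_pos.mpr ht)
      field_simp
    linarith [h4, h5, h6.le, h6.ge]
  have hfin2 := hfinal
  rw [hH t, hH t₀] at hfin2
  exact hfin2
end
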